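/- arXiv:1903.07346 — 7 statements merged into one kernel-verified Lean document; each statement's English description precedes it below -/
import Mathlib

section
/- For every n ≥ 1 and k ≥ 1, the generating function identity holds: ∑_{k ≥ 0} θ_{n,k}(t) z^k = ∏_{m=1}^{n} (1 + a_m z / (1 - a_m z t)), as an identity of formal power series in z (with coefficients polynomials in t), where θ_{n,k}(t) = ∑_{n ≥ ℓ_1 ≥ ... ≥ ℓ_k ≥ 1} a_{ℓ_1}···a_{ℓ_k} t^{σ(ℓ)}. -/
/-- The set of weakly decreasing `k`-tuples with entries in `{1,...,n}`. -/
def multisetTuples (n k : ℕ) : Finset (Fin k → ℕ) :=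
  (Fintype.piFinset fun _ : Fin k => Finset.Icc 1 n).filter
    fun ℓ => ∀ i j : Fin k, i ≤ j → ℓ j ≤ ℓ i

/-- The number of adjacent equalities `ℓ_j = ℓ_{j+1}` in a tuple. -/
def sigmaEq {k : ℕ} (ℓ : Fin k → ℕ) : ℕ :=
  (Finset.univ.filter fun p : Fin k × Fin k =>
    (p.2 : ℕ) = (p.1 : ℕ) + 1 ∧ ℓ p.1 = ℓ p.2).card

open PowerSeries Polynomial in
/-- θ_{n,k}(t) as a polynomial in the interpolation variable t. -/
noncomputable def thetaPoly (a : ℕ → ℝ) (n k : ℕ) : Polynomial ℝ :=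
  ∑ ℓ ∈ multisetTuples n k, Polynomial.C (∏ i, a (ℓ i)) * Polynomial.X ^ sigmaEq ℓ

/-! ### Auxiliary definitions and lemmas -/

open PowerSeries Polynomial

/-- The coefficient sequence of each factor of the product. -/
noncomputable def gcoef (a : ℕ → ℝ) (m j : ℕ) : Polynomial ℝ :=
  if j = 0 then 1 else Polynomial.C (a m) ^ j * Polynomial.X ^ (j - 1)

lemma geom_mul (b : Polynomial ℝ) :
    (1 - PowerSeries.C (R := Polynomial ℝ) b * PowerSeries.X) *
      PowerSeries.mk (fun j => b ^ j) = 1 := by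
  ext j
  rw [sub_mul, one_mul, map_sub]
  cases j with
  | zero => simp
  | succ j =>
    rw [mul_assoc, PowerSeries.coeff_C_mul, PowerSeries.coeff_succ_X_mul]
    simp [PowerSeries.coeff_mk, pow_succ, mul_comm]

lemma inv_eq (b : Polynomial ℝ) :
    PowerSeries.invOfUnit (1 - PowerSeries.C (R := Polynomial ℝ) b * PowerSeries.X) 1 =
      PowerSeries.mk (fun j => b ^ j) := by
  have h1 := PowerSeries.mul_invOfUnit (1 - PowerSeries.C (R := Polynomial ℝ) b * PowerSeries.X) 1
    (by simp)
  calc PowerSeries.invOfUnit (1 - PowerSeries.C (R := Polynomial ℝ) b * PowerSeries.X) 1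
      = ((1 - PowerSeries.C (R := Polynomial ℝ) b * PowerSeries.X) * PowerSeries.mk (fun j => b ^ j)) *
        PowerSeries.invOfUnit (1 - PowerSeries.C (R := Polynomial ℝ) b * PowerSeries.X) 1 := by
        rw [geom_mul, one_mul]
    _ = PowerSeries.mk (fun j => b ^ j) := by
        rw [mul_comm (1 - _) _, mul_assoc, h1, mul_one]

lemma coeff_factor (a : ℕ → ℝ) (m j : ℕ) :
    PowerSeries.coeff (R := Polynomial ℝ) j
      (1 + (PowerSeries.C (R := Polynomial ℝ) (Polynomial.C (a m)) * PowerSeries.X) *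
        PowerSeries.invOfUnit
          (1 - PowerSeries.C (R := Polynomial ℝ) (Polynomial.C (a m) * Polynomial.X) *
            PowerSeries.X) 1) = gcoef a m j := by
  rw [inv_eq, map_add]
  cases j with
  | zero => simp [gcoef]
  | succ j =>
    rw [mul_assoc, PowerSeries.coeff_C_mul, PowerSeries.coeff_succ_X_mul, PowerSeries.coeff_mk]
    simp only [gcoef, Nat.succ_ne_zero, if_false, Nat.add_sub_cancel]
    rw [PowerSeries.coeff_one, if_neg (Nat.succ_ne_zero j)]
    rw [mul_pow]
    ring

def predF {k : ℕ} (j : Fin k) : Fin k := ⟨(j : ℕ) - 1, lt_of_le_of_lt (Nat.sub_le _ _) j.isLt⟩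

lemma sigmaEq_eq_cardJ {k : ℕ} (ℓ : Fin k → ℕ) :
    sigmaEq ℓ = (Finset.univ.filter fun j : Fin k => 0 < (j : ℕ) ∧ ℓ (predF j) = ℓ j).card := by
  refine Finset.card_bij' (fun p _ => p.2) (fun j _ => (predF j, j)) ?_ ?_ ?_ ?_
  · intro p hp
    simp only [Finset.mem_filter, Finset.mem_univ, true_and] at hp ⊢
    have hpred : predF p.2 = p.1 := by apply Fin.ext; simp [predF, hp.1]
    exact ⟨by omega, by rw [hpred]; exact hp.2⟩
  · intro j hj
    simp only [Finset.mem_filter, Finset.mem_univ, true_and] at hj ⊢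
    constructor
    · simp only [predF]; omega
    · exact hj.2
  · intro p hp
    simp only [Finset.mem_filter, Finset.mem_univ, true_and] at hp
    have hpred : predF p.2 = p.1 := by apply Fin.ext; simp [predF, hp.1]
    simp [hpred]
  · intro j hj; rfl

lemma drops_card {k : ℕ} (ℓ : Fin k → ℕ) (h : ∀ i j : Fin k, i ≤ j → ℓ j ≤ ℓ i) :
    (Finset.univ.filter fun j : Fin k => ¬(0 < (j : ℕ) ∧ ℓ (predF j) = ℓ j)).card =
      (Finset.univ.image ℓ).card := by
  have key : ∀ j₁ j₂ : Fin k, j₁ < j₂ →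
      (¬(0 < (j₂ : ℕ) ∧ ℓ (predF j₂) = ℓ j₂)) → ℓ j₁ ≠ ℓ j₂ := by
    intro j₁ j₂ hlt h₂ hval
    have hltn : (j₁ : ℕ) < (j₂ : ℕ) := hlt
    have hpos : 0 < (j₂ : ℕ) := by omega
    have h1 : ℓ j₂ ≤ ℓ (predF j₂) := by
      apply h
      rw [Fin.le_def]
      simp [predF]
    have h2 : ℓ (predF j₂) ≤ ℓ j₁ := by
      apply h
      rw [Fin.le_def]
      simp only [predF]
      omega
    have : ℓ (predF j₂) = ℓ j₂ := le_antisymm (hval ▸ h2) h1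
    exact (not_and.mp h₂ hpos) this
  refine Finset.card_bij (fun j _ => ℓ j) ?_ ?_ ?_
  · intro j _; exact Finset.mem_image_of_mem ℓ (Finset.mem_univ j)
  · intro j₁ h₁ j₂ h₂ hval
    simp only [Finset.mem_filter, Finset.mem_univ, true_and] at h₁ h₂
    by_contra hne
    rcases lt_or_gt_of_ne (fun hh : j₁ = j₂ => hne hh) with hlt | hlt
    · exact key j₁ j₂ hlt h₂ hval
    · exact key j₂ j₁ hlt h₁ hval.symm
  · intro v hv
    rw [Finset.mem_image] at hv
    obtain ⟨i, _, hi⟩ := hv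
    have hne : (Finset.univ.filter fun j : Fin k => ℓ j = v).Nonempty := ⟨i, by simp [hi]⟩
    set j := Finset.min' _ hne with hj
    have hjm := Finset.min'_mem _ hne
    simp only [Finset.mem_filter, Finset.mem_univ, true_and] at hjm
    refine ⟨j, ?_, hjm⟩
    simp only [Finset.mem_filter, Finset.mem_univ, true_and, not_and]
    intro hpos he
    have hlt : predF j < j := by rw [Fin.lt_def]; simp only [predF]; omega
    have hle : j ≤ predF j := by
      apply Finset.min'_le
      simp only [Finset.mem_filter, Finset.mem_univ, true_and]
      rw [he]; exact hjm
    exact absurd hle (not_le.mpr hlt)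

lemma sigmaEq_add_image_card {k : ℕ} (ℓ : Fin k → ℕ) (h : ∀ i j : Fin k, i ≤ j → ℓ j ≤ ℓ i) :
    sigmaEq ℓ + (Finset.univ.image ℓ).card = k := by
  rw [sigmaEq_eq_cardJ, ← drops_card ℓ h,
    Finset.card_filter_add_card_filter_not]
  simp

/-- The multiplicity function of a tuple. -/
noncomputable def cnt {k : ℕ} (ℓ : Fin k → ℕ) : ℕ →₀ ℕ :=
  Multiset.toFinsupp (Multiset.map ℓ Finset.univ.val)

lemma cnt_apply {k : ℕ} (ℓ : Fin k → ℕ) (m : ℕ) :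
    cnt ℓ m = Multiset.count m (Multiset.map ℓ Finset.univ.val) :=
  Multiset.toFinsupp_apply _ _

lemma multiset_eq_ofFn {k : ℕ} (ℓ : Fin k → ℕ) :
    Multiset.map ℓ Finset.univ.val = ↑(List.ofFn ℓ) := by
  rw [List.ofFn_eq_map, Fin.univ_def]
  rfl

lemma cnt_support {k : ℕ} (ℓ : Fin k → ℕ) :
    (cnt ℓ).support = Finset.univ.image ℓ := by
  rw [cnt, Multiset.toFinsupp_support]
  ext m
  simp [Multiset.mem_toFinset, Finset.mem_image, multiset_eq_ofFn, List.mem_ofFn]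

lemma cnt_sum_support {k : ℕ} (ℓ : Fin k → ℕ) :
    ∑ m ∈ (cnt ℓ).support, cnt ℓ m = k := by
  have : ∀ m ∈ (cnt ℓ).support, cnt ℓ m = Multiset.count m (Multiset.map ℓ Finset.univ.val) :=
    fun m _ => cnt_apply ℓ m
  rw [Finset.sum_congr rfl this]
  have hsupp2 : (cnt ℓ).support = (Multiset.map ℓ Finset.univ.val).toFinset := by
    rw [cnt, Multiset.toFinsupp_support]
  rw [hsupp2, Multiset.toFinset_sum_count_eq, Multiset.card_map]
  simp

lemma cnt_supp_subset {n k : ℕ} (ℓ : Fin k → ℕ) (hℓ : ℓ ∈ multisetTuples n k) :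
    (cnt ℓ).support ⊆ Finset.Icc 1 n := by
  rw [multisetTuples, Finset.mem_filter, Fintype.mem_piFinset] at hℓ
  rw [cnt_support]
  intro m hm
  rw [Finset.mem_image] at hm
  obtain ⟨i, _, hi⟩ := hm
  exact hi ▸ hℓ.1 i

lemma cnt_mem {n k : ℕ} (ℓ : Fin k → ℕ) (hℓ : ℓ ∈ multisetTuples n k) :
    cnt ℓ ∈ (Finset.Icc 1 n).finsuppAntidiag k := by
  rw [Finset.mem_finsuppAntidiag]
  refine ⟨?_, cnt_supp_subset ℓ hℓ⟩
  rw [← Finset.sum_subset (cnt_supp_subset ℓ hℓ)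
    (fun x _ hx => Finsupp.notMem_support_iff.mp hx)]
  exact cnt_sum_support ℓ

lemma cnt_inj {n k : ℕ} (ℓ₁ : Fin k → ℕ) (h₁ : ℓ₁ ∈ multisetTuples n k)
    (ℓ₂ : Fin k → ℕ) (h₂ : ℓ₂ ∈ multisetTuples n k) (h : cnt ℓ₁ = cnt ℓ₂) : ℓ₁ = ℓ₂ := by
  rw [multisetTuples, Finset.mem_filter] at h₁ h₂
  have hm : Multiset.map ℓ₁ Finset.univ.val = Multiset.map ℓ₂ Finset.univ.val := by
    ext m
    rw [← cnt_apply, ← cnt_apply, h]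
  rw [multiset_eq_ofFn, multiset_eq_ofFn, Multiset.coe_eq_coe] at hm
  have hs₁ : List.Pairwise (· ≥ ·) (List.ofFn ℓ₁) :=
    List.pairwise_ofFn.mpr fun i j hij => h₁.2 i j (le_of_lt hij)
  have hs₂ : List.Pairwise (· ≥ ·) (List.ofFn ℓ₂) :=
    List.pairwise_ofFn.mpr fun i j hij => h₂.2 i j (le_of_lt hij)
  exact List.ofFn_injective (hm.eq_of_pairwise' hs₁ hs₂)

lemma cnt_surj {n k : ℕ} (l : ℕ →₀ ℕ) (hl : l ∈ (Finset.Icc 1 n).finsuppAntidiag k) :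
    ∃ ℓ, ∃ _ : ℓ ∈ multisetTuples n k, cnt ℓ = l := by
  rw [Finset.mem_finsuppAntidiag] at hl
  obtain ⟨hsum, hsupp⟩ := hl
  set M := Finsupp.toMultiset l with hM
  set L := Multiset.sort M (· ≥ ·) with hL
  have hcard : Multiset.card M = k := by
    rw [hM, Finsupp.card_toMultiset, Finsupp.sum]
    simp only [id]
    rw [Finset.sum_subset hsupp (fun x _ hx => Finsupp.notMem_support_iff.mp hx)]
    exact hsum
  have hlen : L.length = k := by
    rw [hL, Multiset.length_sort, hcard]
  refine ⟨fun i : Fin k => L.get ⟨(i : ℕ), by rw [hlen]; exact i.isLt⟩, ?_, ?_⟩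
  · rw [multisetTuples, Finset.mem_filter, Fintype.mem_piFinset]
    constructor
    · intro i
      apply hsupp
      rw [← Finsupp.mem_toMultiset, ← hM, ← Multiset.mem_sort (r := (· ≥ ·)), ← hL]
      exact L.get_mem _
    · intro i j hij
      rcases eq_or_lt_of_le hij with he | hlt
      · rw [he]
      · exact (Multiset.pairwise_sort (s := M) (r := (· ≥ ·))).rel_get_of_lt (Fin.mk_lt_mk.mpr hlt)
  · have hofn : List.ofFn (fun i : Fin k => L.get ⟨(i : ℕ), by rw [hlen]; exact i.isLt⟩) = L := by
      apply List.ext_getElem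
      · simp [hlen]
      · intro m h₁ h₂
        simp [List.getElem_ofFn]
    ext m
    rw [cnt_apply, multiset_eq_ofFn, hofn, hL]
    rw [show ((Multiset.sort M (· ≥ ·) : List ℕ) : Multiset ℕ) = M from Multiset.sort_eq (s := M) (r := (· ≥ ·))]
    rw [hM, Finsupp.count_toMultiset]

lemma weight_eq (a : ℕ → ℝ) {n k : ℕ} (ℓ : Fin k → ℕ) (hℓ : ℓ ∈ multisetTuples n k) :
    Polynomial.C (∏ i, a (ℓ i)) * Polynomial.X ^ sigmaEq ℓ =
      ∏ m ∈ Finset.Icc 1 n, gcoef a m (cnt ℓ m) := by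
  have hsupp := cnt_supp_subset ℓ hℓ
  have hdec : ∀ i j : Fin k, i ≤ j → ℓ j ≤ ℓ i := by
    rw [multisetTuples, Finset.mem_filter] at hℓ
    exact hℓ.2
  rw [← Finset.prod_subset hsupp (fun m _ hm => by
    simp [gcoef, Finsupp.notMem_support_iff.mp hm])]
  have hpos : ∀ m ∈ (cnt ℓ).support, cnt ℓ m ≠ 0 := fun m hm =>
    Finsupp.mem_support_iff.mp hm
  rw [Finset.prod_congr rfl (fun m hm => show gcoef a m (cnt ℓ m) =
      Polynomial.C (a m) ^ cnt ℓ m * Polynomial.X ^ (cnt ℓ m - 1) from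
      if_neg (hpos m hm))]
  rw [Finset.prod_mul_distrib, Finset.prod_pow_eq_pow_sum]
  -- exponent equality
  have h1 : sigmaEq ℓ + (cnt ℓ).support.card = k := by
    rw [cnt_support]; exact sigmaEq_add_image_card ℓ hdec
  have h2 : ∑ m ∈ (cnt ℓ).support, cnt ℓ m = k := cnt_sum_support ℓ
  have h3 : ∑ m ∈ (cnt ℓ).support, (cnt ℓ m - 1) + (cnt ℓ).support.card =
      ∑ m ∈ (cnt ℓ).support, cnt ℓ m := by
    rw [Finset.card_eq_sum_ones, ← Finset.sum_add_distrib]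
    exact Finset.sum_congr rfl fun m hm => by have := hpos m hm; omega
  have hexp : sigmaEq ℓ = ∑ m ∈ (cnt ℓ).support, (cnt ℓ m - 1) := by omega
  rw [hexp]
  congr 1
  -- constant part
  have hts : (Multiset.map ℓ Finset.univ.val).toFinset = (cnt ℓ).support := by
    rw [cnt, Multiset.toFinsupp_support]
  have hprod : ∏ i, a (ℓ i) = ∏ m ∈ (cnt ℓ).support, a m ^ cnt ℓ m := by
    rw [Finset.prod_eq_multiset_prod,
      show (fun i => a (ℓ i)) = a ∘ ℓ from rfl, ← Multiset.map_map a ℓ,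
      Finset.prod_multiset_map_count, hts]
    exact Finset.prod_congr rfl fun m hm => by rw [cnt_apply]
  rw [hprod, map_prod]
  exact Finset.prod_congr rfl fun m hm => by rw [map_pow]

open PowerSeries Polynomial in
theorem theta_generating_function (a : ℕ → ℝ) (n : ℕ) (hn : 1 ≤ n) :
    PowerSeries.mk (fun k => thetaPoly a n k) =
      ∏ m ∈ Finset.Icc 1 n,
        (1 + (PowerSeries.C (R := Polynomial ℝ) (Polynomial.C (a m)) * PowerSeries.X) *
          PowerSeries.invOfUnit
            (1 - PowerSeries.C (R := Polynomial ℝ) (Polynomial.C (a m) * Polynomial.X) *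
              PowerSeries.X) 1) := by
  refine PowerSeries.ext fun k => ?_
  rw [PowerSeries.coeff_mk, PowerSeries.coeff_prod]
  have hco : ∀ l : ℕ →₀ ℕ, ∀ m ∈ Finset.Icc 1 n,
      PowerSeries.coeff (R := Polynomial ℝ) (l m)
        (1 + (PowerSeries.C (R := Polynomial ℝ) (Polynomial.C (a m)) * PowerSeries.X) *
          PowerSeries.invOfUnit
            (1 - PowerSeries.C (R := Polynomial ℝ) (Polynomial.C (a m) * Polynomial.X) *
              PowerSeries.X) 1) = gcoef a m (l m) := fun l m _ => coeff_factor a m (l m)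
  rw [Finset.sum_congr rfl fun l _ => Finset.prod_congr rfl (hco l)]
  rw [thetaPoly]
  exact Finset.sum_bij (t := (Finset.Icc 1 n).finsuppAntidiag k)
    (g := fun l => ∏ m ∈ Finset.Icc 1 n, gcoef a m (l m))
    (fun ℓ _ => cnt ℓ) (fun ℓ hℓ => cnt_mem ℓ hℓ) cnt_inj cnt_surj
    (fun ℓ hℓ => weight_eq a ℓ hℓ)
end

section
/- For every n, k ≥ 0 and any weight sequence (a_j), θ_{n,k}(t) = ∑_{j=0}^{k} t^j · θ_{n,j}(1) · (1-t)^{k-j} · θ_{n,k-j}(0), where θ_{n,j}(1) = h_j(a_1,...,a_n) is the complete homogeneous symmetric polynomial and θ_{n,k-j}(0) = e_{k-j}(a_1,...,a_n) is the elementary symmetric polynomial. -/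
/-- The set of strictly decreasing `k`-tuples with entries in `{1,...,n}`. -/
def setTuples (n k : ℕ) : Finset (Fin k → ℕ) :=
  (Fintype.piFinset fun _ : Fin k => Finset.Icc 1 n).filter
    fun ℓ => ∀ i j : Fin k, i < j → ℓ j < ℓ i

/-- The interpolated weighted multiset sum θ_{n,k}(t) for weight sequence a. -/
noncomputable def theta (a : ℕ → ℝ) (n k : ℕ) (t : ℝ) : ℝ :=
  ∑ ℓ ∈ multisetTuples n k, (∏ i, a (ℓ i)) * t ^ sigmaEq ℓ

open Finset

namespace ThetaDecomp

lemma mem_multisetTuples {n k : ℕ} {ℓ : Fin k → ℕ} :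
    ℓ ∈ multisetTuples n k ↔
      (∀ i, ℓ i ∈ Finset.Icc 1 n) ∧ ∀ i j : Fin k, i ≤ j → ℓ j ≤ ℓ i := by
  simp [multisetTuples, Fintype.mem_piFinset]

lemma sorted_ofFn {n k : ℕ} {ℓ : Fin k → ℕ} (h : ℓ ∈ multisetTuples n k) :
    (List.ofFn ℓ).Pairwise (· ≥ ·) :=
  List.pairwise_ofFn.2 fun _ _ hij => (mem_multisetTuples.1 h).2 _ _ hij.le

/-- positions followed by an equal entry -/
def eqSet {k : ℕ} (ℓ : Fin k → ℕ) : Finset (Fin k) :=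
  Finset.univ.filter fun i => ∃ h : (i : ℕ) + 1 < k, ℓ ⟨(i : ℕ) + 1, h⟩ = ℓ i

lemma sigmaEq_eq {k : ℕ} (ℓ : Fin k → ℕ) : sigmaEq ℓ = (eqSet ℓ).card := by
  unfold sigmaEq eqSet
  apply Finset.card_bij (fun p _ => p.1)
  · rintro ⟨p1, p2⟩ hp
    simp only [mem_filter, mem_univ, true_and] at hp ⊢
    obtain ⟨h1, h2⟩ := hp
    have hlt : (p1 : ℕ) + 1 < k := h1 ▸ p2.isLt
    exact ⟨hlt, by rw [show (⟨(p1 : ℕ) + 1, hlt⟩ : Fin k) = p2 from Fin.ext h1.symm]; exact h2.symm⟩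
  · rintro ⟨p1, p2⟩ hp ⟨q1, q2⟩ hq h
    simp only [mem_filter, mem_univ, true_and] at hp hq
    simp only at h
    subst h
    obtain ⟨hp1, -⟩ := hp
    obtain ⟨hq1, -⟩ := hq
    exact Prod.ext rfl (Fin.ext (hp1.trans hq1.symm))
  · intro i hi
    simp only [mem_filter, mem_univ, true_and] at hi
    obtain ⟨h, he⟩ := hi
    exact ⟨(i, ⟨(i : ℕ) + 1, h⟩), by simp [he], rfl⟩

lemma card_toFinset_add {n k : ℕ} {ℓ : Fin k → ℕ} (hm : ℓ ∈ multisetTuples n k) :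
    (List.ofFn ℓ).toFinset.card + (eqSet ℓ).card = k := by
  classical
  have antit := (mem_multisetTuples.1 hm).2
  have himg : (List.ofFn ℓ).toFinset = Finset.image ℓ Finset.univ := by
    ext x; simp [List.mem_ofFn, eq_comm]
  set R : Finset (Fin k) :=
    Finset.univ.filter (fun i => ¬ ∃ h : (i : ℕ) + 1 < k, ℓ ⟨(i : ℕ) + 1, h⟩ = ℓ i) with hR
  have hinj : Set.InjOn ℓ (R : Set (Fin k)) := by
    intro i hi j hj hij
    by_contra hne
    rcases Ne.lt_or_gt hne with hlt | hlt
    · simp only [hR, coe_filter, Set.mem_setOf_eq] at hi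
      apply hi.2
      have h1 : (i : ℕ) + 1 < k := by have := j.isLt; have := Fin.lt_def.1 hlt; omega
      refine ⟨h1, le_antisymm (antit _ _ (Fin.le_def.2 (by simp))) ?_⟩
      have h2 : ℓ j ≤ ℓ ⟨(i : ℕ) + 1, h1⟩ := antit _ _ (Fin.le_def.2 (by
        have := Fin.lt_def.1 hlt; simp; omega))
      rw [hij]; exact h2
    · simp only [hR, coe_filter, Set.mem_setOf_eq] at hj
      apply hj.2
      have h1 : (j : ℕ) + 1 < k := by have := i.isLt; have := Fin.lt_def.1 hlt; omega
      refine ⟨h1, le_antisymm (antit _ _ (Fin.le_def.2 (by simp))) ?_⟩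
      have h2 : ℓ i ≤ ℓ ⟨(j : ℕ) + 1, h1⟩ := antit _ _ (Fin.le_def.2 (by
        have := Fin.lt_def.1 hlt; simp; omega))
      rw [← hij]; exact h2
  have hsurj : Finset.image ℓ Finset.univ = Finset.image ℓ R := by
    apply le_antisymm
    · intro x hx
      rw [Finset.mem_image] at hx
      obtain ⟨i, _, rfl⟩ := hx
      have hne : (Finset.univ.filter (fun j => ℓ j = ℓ i)).Nonempty :=
        ⟨i, by simp⟩
      set m := (Finset.univ.filter (fun j => ℓ j = ℓ i)).max' hne with hmdef
      have hmmem : m ∈ Finset.univ.filter (fun j => ℓ j = ℓ i) :=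
        Finset.max'_mem _ hne
      have hmval : ℓ m = ℓ i := (Finset.mem_filter.1 hmmem).2
      have hmR : m ∈ R := by
        simp only [hR, Finset.mem_filter, Finset.mem_univ, true_and]
        rintro ⟨h, he⟩
        have : (⟨(m : ℕ) + 1, h⟩ : Fin k) ∈ Finset.univ.filter (fun j => ℓ j = ℓ i) := by
          simp [he, hmval]
        have := Finset.le_max' _ _ this
        have := Fin.le_def.1 this
        simp at this
        exact lt_irrefl _ this
      exact Finset.mem_image.2 ⟨m, hmR, hmval⟩
    · exact Finset.image_subset_image (Finset.filter_subset _ _)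
  have hcard : (Finset.image ℓ Finset.univ).card = R.card := by
    rw [hsurj, Finset.card_image_of_injOn hinj]
  have hsplit := Finset.card_filter_add_card_filter_not
    (s := (Finset.univ : Finset (Fin k)))
    (p := fun i => ∃ h : (i : ℕ) + 1 < k, ℓ ⟨(i : ℕ) + 1, h⟩ = ℓ i)
  rw [himg, hcard]
  have : (eqSet ℓ).card + R.card = k := by
    rw [eqSet, hR]
    simpa using hsplit
  omega

/-- Multisets of size `k` with entries in `{1,...,n}`, as the image of sorted tuples. -/
def msets (n k : ℕ) : Finset (Multiset ℕ) :=
  (multisetTuples n k).image fun ℓ => (↑(List.ofFn ℓ) : Multiset ℕ)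

lemma inj_ofFn {n k : ℕ} {ℓ ℓ' : Fin k → ℕ} (h : ℓ ∈ multisetTuples n k)
    (h' : ℓ' ∈ multisetTuples n k)
    (he : (↑(List.ofFn ℓ) : Multiset ℕ) = (↑(List.ofFn ℓ') : Multiset ℕ)) : ℓ = ℓ' := by
  have hperm : List.Perm (List.ofFn ℓ) (List.ofFn ℓ') := Multiset.coe_eq_coe.1 he
  exact List.ofFn_injective (hperm.eq_of_pairwise' (sorted_ofFn h) (sorted_ofFn h'))

lemma theta_eq (a : ℕ → ℝ) (n k : ℕ) (t : ℝ) :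
    theta a n k t = ∑ N ∈ msets n k, (N.map a).prod * t ^ (k - N.toFinset.card) := by
  classical
  rw [msets, Finset.sum_image (fun x hx y hy => inj_ofFn hx hy)]
  apply Finset.sum_congr rfl
  intro ℓ hℓ
  congr 1
  · rw [Multiset.map_coe, Multiset.prod_coe, List.map_ofFn, List.prod_ofFn]
    rfl
  · congr 1
    have h1 := card_toFinset_add hℓ
    have h2 := sigmaEq_eq ℓ
    have h3 : (↑(List.ofFn ℓ) : Multiset ℕ).toFinset = (List.ofFn ℓ).toFinset := rfl
    rw [h3]
    omega

lemma mem_msets {n k : ℕ} {N : Multiset ℕ} :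
    N ∈ msets n k ↔ Multiset.card N = k ∧ ∀ x ∈ N, x ∈ Finset.Icc 1 n := by
  classical
  constructor
  · intro h
    rw [msets, Finset.mem_image] at h
    obtain ⟨ℓ, hℓ, rfl⟩ := h
    constructor
    · simp
    · intro x hx
      rw [Multiset.mem_coe, List.mem_ofFn] at hx
      obtain ⟨i, rfl⟩ := hx
      exact (mem_multisetTuples.1 hℓ).1 i
  · rintro ⟨hcard, hmem⟩
    set L := N.sort (· ≥ ·) with hLdef
    have hlen : L.length = k := by rw [hLdef, Multiset.length_sort]; exact hcard
    have hsorted : L.Pairwise (· ≥ ·) := Multiset.pairwise_sort _ _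
    refine Finset.mem_image.2 ⟨fun i => L.get (Fin.cast hlen.symm i), ?_, ?_⟩
    · refine mem_multisetTuples.2 ⟨fun i => ?_, fun i j hij => ?_⟩
      · apply hmem
        rw [← Multiset.mem_sort (· ≥ ·)]
        exact L.get_mem _
      · exact hsorted.rel_get_of_le hij
    · have hofn : List.ofFn (fun i => L.get (Fin.cast hlen.symm i)) = L := by
        apply List.ext_getElem (by simp [hlen])
        intro i h1 h2
        simp
      rw [hofn, hLdef, Multiset.sort_eq]

/-- Nodup multisets (i.e. sets) of size `m` with entries in `{1,...,n}`. -/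
def nmsets (n m : ℕ) : Finset (Multiset ℕ) :=
  (msets n m).filter fun N => N.toFinset.card = m

lemma theta_one (a : ℕ → ℝ) (n j : ℕ) :
    theta a n j 1 = ∑ N ∈ msets n j, (N.map a).prod := by
  rw [theta_eq]; simp

lemma theta_zero (a : ℕ → ℝ) (n m : ℕ) :
    theta a n m 0 = ∑ N ∈ nmsets n m, (N.map a).prod := by
  classical
  rw [theta_eq, nmsets, Finset.sum_filter]
  apply Finset.sum_congr rfl
  intro N hN
  have hd : N.toFinset.card ≤ m := by
    rw [← (mem_msets.1 hN).1]; exact Multiset.toFinset_card_le N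
  rw [zero_pow_eq]
  by_cases hdm : N.toFinset.card = m
  · simp [hdm]
  · have : m - N.toFinset.card ≠ 0 := by omega
    simp [hdm, this]

lemma powerset_sum {s : Finset ℕ} {kk : ℕ} (hs : s.card ≤ kk) (t : ℝ) :
    (t : ℝ) ^ (kk - s.card) = ∑ T ∈ s.powerset, t ^ (kk - T.card) * (1 - t) ^ T.card := by
  classical
  have h0 := Finset.prod_add (fun _ : ℕ => (1 - t)) (fun _ : ℕ => t) s
  simp only [sub_add_cancel, Finset.prod_const, one_pow] at h0
  have h1 : (1 : ℝ) = ∑ T ∈ s.powerset, (1 - t) ^ T.card * t ^ (s.card - T.card) := by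
    refine h0.trans (Finset.sum_congr rfl fun T hT => ?_)
    rw [Finset.card_sdiff_of_subset (Finset.mem_powerset.1 hT)]
  calc t ^ (kk - s.card)
      = t ^ (kk - s.card) * ∑ T ∈ s.powerset, (1 - t) ^ T.card * t ^ (s.card - T.card) := by
        rw [← h1, mul_one]
    _ = ∑ T ∈ s.powerset, t ^ (kk - s.card) * ((1 - t) ^ T.card * t ^ (s.card - T.card)) :=
        Finset.mul_sum _ _ _
    _ = ∑ T ∈ s.powerset, t ^ (kk - T.card) * (1 - t) ^ T.card := by
        apply Finset.sum_congr rfl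
        intro T hT
        have hT' : T.card ≤ s.card := Finset.card_le_card (Finset.mem_powerset.1 hT)
        rw [show kk - T.card = (kk - s.card) + (s.card - T.card) by omega, pow_add]
        ring

set_option maxHeartbeats 1000000 in
lemma key (a : ℕ → ℝ) (n k : ℕ) (t : ℝ) :
    ∑ j ∈ Finset.range (k + 1),
        t ^ j * (∑ M ∈ msets n j, (M.map a).prod) * (1 - t) ^ (k - j) *
          (∑ P ∈ nmsets n (k - j), (P.map a).prod)
      = ∑ N ∈ msets n k, (N.map a).prod * t ^ (k - N.toFinset.card) := by
  classical
  have lhs_eq : ∀ j ∈ Finset.range (k + 1),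
      t ^ j * (∑ M ∈ msets n j, (M.map a).prod) * (1 - t) ^ (k - j) *
          (∑ P ∈ nmsets n (k - j), (P.map a).prod)
        = ∑ p ∈ (msets n j) ×ˢ (nmsets n (k - j)),
            t ^ j * (p.1.map a).prod * (1 - t) ^ (k - j) * (p.2.map a).prod := by
    intro j _
    rw [Finset.sum_product]
    simp only [Finset.sum_mul, Finset.mul_sum]
    rw [Finset.sum_comm]
  have rhs_eq : ∀ N ∈ msets n k,
      (N.map a).prod * t ^ (k - N.toFinset.card)
        = ∑ T ∈ N.toFinset.powerset, (N.map a).prod * (t ^ (k - T.card) * (1 - t) ^ T.card) := by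
    intro N hN
    have hd : N.toFinset.card ≤ k := by
      rw [← (mem_msets.1 hN).1]; exact Multiset.toFinset_card_le N
    rw [powerset_sum hd t, Finset.mul_sum]
  calc ∑ j ∈ Finset.range (k + 1),
        t ^ j * (∑ M ∈ msets n j, (M.map a).prod) * (1 - t) ^ (k - j) *
          (∑ P ∈ nmsets n (k - j), (P.map a).prod)
      = ∑ j ∈ Finset.range (k + 1), ∑ p ∈ (msets n j) ×ˢ (nmsets n (k - j)),
          t ^ j * (p.1.map a).prod * (1 - t) ^ (k - j) * (p.2.map a).prod :=
        Finset.sum_congr rfl lhs_eq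
    _ = ∑ x ∈ (Finset.range (k + 1)).sigma (fun j => (msets n j) ×ˢ (nmsets n (k - j))),
          t ^ x.1 * (x.2.1.map a).prod * (1 - t) ^ (k - x.1) * (x.2.2.map a).prod :=
        (Finset.sum_sigma (Finset.range (k + 1))
          (fun j => (msets n j) ×ˢ (nmsets n (k - j)))
          (fun x => t ^ x.1 * (x.2.1.map a).prod * (1 - t) ^ (k - x.1) *
            (x.2.2.map a).prod)).symm
    _ = ∑ y ∈ (msets n k).sigma (fun N => N.toFinset.powerset),
          (y.1.map a).prod * (t ^ (k - y.2.card) * (1 - t) ^ y.2.card) := by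
        apply Finset.sum_nbij'
          (i := fun x => (⟨x.2.1 + x.2.2, x.2.2.toFinset⟩ : Σ _ : Multiset ℕ, Finset ℕ))
          (j := fun y => (⟨k - y.2.card, (y.1 - y.2.val, y.2.val)⟩ :
            Σ _ : ℕ, Multiset ℕ × Multiset ℕ))
        · rintro ⟨j, M, P⟩ hx
          simp only [Finset.mem_sigma, Finset.mem_range, Finset.mem_product] at hx
          obtain ⟨hj, hM, hP⟩ := hx
          rw [nmsets, Finset.mem_filter] at hP
          obtain ⟨hPm, hPcard⟩ := hP
          simp only [Finset.mem_sigma]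
          constructor
          · rw [mem_msets]
            constructor
            · rw [Multiset.card_add, (mem_msets.1 hM).1, (mem_msets.1 hPm).1]; omega
            · intro x hx
              rcases Multiset.mem_add.1 hx with h | h
              · exact (mem_msets.1 hM).2 x h
              · exact (mem_msets.1 hPm).2 x h
          · rw [Finset.mem_powerset]
            intro x hx
            rw [Multiset.mem_toFinset] at hx ⊢
            exact Multiset.mem_add.2 (Or.inr hx)
        · rintro ⟨N, T⟩ hy
          simp only [Finset.mem_sigma, Finset.mem_powerset] at hy
          obtain ⟨hN, hT⟩ := hy
          have hNk : Multiset.card N = k := (mem_msets.1 hN).1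
          have hTN : T.val ≤ N := by
            rw [Multiset.le_iff_count]
            intro x
            by_cases hx : x ∈ T
            · rw [Multiset.count_eq_one_of_mem T.nodup hx]
              exact Multiset.one_le_count_iff_mem.2 (Multiset.mem_toFinset.1 (hT hx))
            · rw [Multiset.count_eq_zero_of_notMem (by simpa using hx)]
              omega
          have hTval : Multiset.card T.val = T.card := rfl
          have hTcard : T.card ≤ k := by
            have := Multiset.card_le_card hTN
            omega
          simp only [Finset.mem_sigma, Finset.mem_range, Finset.mem_product]
          refine ⟨by omega, ?_, ?_⟩
          · rw [mem_msets]
            constructor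
            · rw [Multiset.card_sub hTN]; omega
            · intro x hx
              exact (mem_msets.1 hN).2 x (Multiset.mem_of_le (Multiset.sub_le_self _ _) hx)
          · rw [nmsets, Finset.mem_filter]
            refine ⟨?_, ?_⟩
            · rw [mem_msets]
              refine ⟨by omega, ?_⟩
              intro x hx
              exact (mem_msets.1 hN).2 x (Multiset.mem_of_le hTN hx)
            · rw [Finset.val_toFinset]
              omega
        · rintro ⟨j, M, P⟩ hx
          simp only [Finset.mem_sigma, Finset.mem_range, Finset.mem_product] at hx
          obtain ⟨hj, hM, hP⟩ := hx
          rw [nmsets, Finset.mem_filter] at hP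
          obtain ⟨hPm, hPcard⟩ := hP
          have hPnodup : P.Nodup := by
            rw [← Multiset.toFinset_card_eq_card_iff_nodup, hPcard, (mem_msets.1 hPm).1]
          have h2 : P.toFinset.val = P := Multiset.dedup_eq_self.2 hPnodup
          simp only
          rw [show P.toFinset.card = k - j from hPcard, h2, add_tsub_cancel_right]
          congr 1
          omega
        · rintro ⟨N, T⟩ hy
          simp only [Finset.mem_sigma, Finset.mem_powerset] at hy
          obtain ⟨hN, hT⟩ := hy
          have hTN : T.val ≤ N := by
            rw [Multiset.le_iff_count]
            intro x
            by_cases hx : x ∈ T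
            · rw [Multiset.count_eq_one_of_mem T.nodup hx]
              exact Multiset.one_le_count_iff_mem.2 (Multiset.mem_toFinset.1 (hT hx))
            · rw [Multiset.count_eq_zero_of_notMem (by simpa using hx)]
              omega
          simp only
          rw [tsub_add_cancel_of_le hTN, Finset.val_toFinset]
        · rintro ⟨j, M, P⟩ hx
          simp only [Finset.mem_sigma, Finset.mem_range, Finset.mem_product] at hx
          obtain ⟨hj, hM, hP⟩ := hx
          rw [nmsets, Finset.mem_filter] at hP
          obtain ⟨hPm, hPcard⟩ := hP
          simp only
          rw [Multiset.map_add, Multiset.prod_add,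
            show P.toFinset.card = k - j from hPcard, show k - (k - j) = j by omega]
          ring
    _ = ∑ N ∈ msets n k, ∑ T ∈ N.toFinset.powerset,
          (N.map a).prod * (t ^ (k - T.card) * (1 - t) ^ T.card) :=
        Finset.sum_sigma (msets n k) (fun N => N.toFinset.powerset)
          (fun y => (y.1.map a).prod * (t ^ (k - y.2.card) * (1 - t) ^ y.2.card))
    _ = ∑ N ∈ msets n k, (N.map a).prod * t ^ (k - N.toFinset.card) :=
        (Finset.sum_congr rfl rhs_eq).symm

end ThetaDecomp

theorem theta_decomposition (a : ℕ → ℝ) (n k : ℕ) (t : ℝ) :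
    theta a n k t =
      ∑ j ∈ Finset.range (k + 1),
        t ^ j * theta a n j 1 * (1 - t) ^ (k - j) * theta a n (k - j) 0 := by
  rw [ThetaDecomp.theta_eq a n k t, ← ThetaDecomp.key a n k t]
  apply Finset.sum_congr rfl
  intro j _
  rw [ThetaDecomp.theta_one, ThetaDecomp.theta_zero]
end

section
/- For all n ≥ 1 and k ≥ 1, the truncated multiple zeta star value satisfies ζ*_n({1}_k) := ∑_{n ≥ ℓ_1 ≥ ... ≥ ℓ_k ≥ 1} 1/(ℓ_1···ℓ_k) = ∑_{j=1}^{n} C(n,j) (-1)^{j-1} / j^k. -/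
open Finset

noncomputable def Szs (n k : ℕ) : ℝ := ∑ ℓ ∈ multisetTuples n k, ∏ i, (1 : ℝ) / (ℓ i : ℝ)

noncomputable def Tzs (n k : ℕ) : ℝ :=
  ∑ j ∈ Finset.Icc 1 n, (n.choose j : ℝ) * (-1 : ℝ) ^ (j - 1) / (j : ℝ) ^ k

lemma mem_multisetTuples {n k : ℕ} {ℓ : Fin k → ℕ} :
    ℓ ∈ multisetTuples n k ↔
      (∀ i, 1 ≤ ℓ i ∧ ℓ i ≤ n) ∧ ∀ i j : Fin k, i ≤ j → ℓ j ≤ ℓ i := by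
  simp [multisetTuples, Fintype.mem_piFinset]

lemma Szs_zero (n : ℕ) : Szs n 0 = 1 := by
  have h : multisetTuples n 0 = {![]} := by
    ext ℓ
    simp [mem_multisetTuples, Subsingleton.elim ℓ ![]]
  simp [Szs, h]

lemma Szs_succ (n k : ℕ) : Szs n (k + 1) = ∑ m ∈ Icc 1 n, (1 / (m : ℝ)) * Szs m k := by
  have hR : (∑ m ∈ Icc 1 n, (1 / (m : ℝ)) * Szs m k)
      = ∑ p ∈ (Icc 1 n).sigma (fun m => multisetTuples m k),
          (1 / (p.1 : ℝ)) * ∏ i, (1 : ℝ) / (p.2 i : ℝ) := by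
    rw [Finset.sum_sigma]
    simp [Szs, Finset.mul_sum]
  rw [hR, Szs]
  refine Finset.sum_nbij' (fun ℓ => ⟨ℓ 0, Fin.tail ℓ⟩) (fun p => Fin.cons p.1 p.2)
    ?_ ?_ ?_ ?_ ?_
  · intro ℓ hℓ
    rw [mem_multisetTuples] at hℓ
    obtain ⟨hmem, hdec⟩ := hℓ
    simp only [Finset.mem_sigma, Finset.mem_Icc]
    refine ⟨⟨(hmem 0).1, (hmem 0).2⟩, ?_⟩
    rw [mem_multisetTuples]
    constructor
    · intro i
      exact ⟨(hmem i.succ).1, hdec 0 i.succ (Fin.zero_le _)⟩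
    · intro i j hij
      exact hdec i.succ j.succ (by simpa using hij)
  · intro p hp
    simp only [Finset.mem_sigma, Finset.mem_Icc] at hp
    obtain ⟨⟨h1, h2⟩, ht⟩ := hp
    rw [mem_multisetTuples] at ht ⊢
    obtain ⟨hmem, hdec⟩ := ht
    constructor
    · intro i
      refine Fin.cases ?_ ?_ i
      · simpa using ⟨h1, h2⟩
      · intro i'
        simp only [Fin.cons_succ]
        exact ⟨(hmem i').1, le_trans (hmem i').2 h2⟩
    · intro i j hij
      rcases Fin.eq_zero_or_eq_succ j with rfl | ⟨j', rfl⟩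
      · have hi0 : i = 0 := Fin.le_zero_iff.mp hij
        subst hi0
        exact le_refl _
      · rcases Fin.eq_zero_or_eq_succ i with rfl | ⟨i', rfl⟩
        · simp only [Fin.cons_succ, Fin.cons_zero]
          exact (hmem j').2
        · simp only [Fin.cons_succ]
          exact hdec i' j' (Fin.succ_le_succ_iff.mp hij)
  · intro ℓ _
    exact Fin.cons_self_tail ℓ
  · intro p _
    simp [Fin.tail_cons]
  · intro ℓ _
    rw [Fin.prod_univ_succ]
    simp [Fin.tail]

lemma alt_sum_choose (N : ℕ) (hN : 1 ≤ N) :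
    ∑ j ∈ Icc 1 N, (N.choose j : ℝ) * (-1 : ℝ) ^ (j - 1) = 1 := by
  have h : ∑ i ∈ range (N + 1), (-1 : ℝ) ^ i * (N.choose i : ℝ) = 0 := by
    have h0 := Int.alternating_sum_range_choose_of_ne (n := N) (by omega)
    have := congrArg (Int.cast : ℤ → ℝ) h0
    push_cast at this
    simpa using this
  have hins : range (N + 1) = insert 0 (Icc 1 N) := by
    ext x; simp only [mem_range, mem_insert, mem_Icc]; omega
  rw [hins, Finset.sum_insert (by simp)] at h
  simp only [pow_zero, Nat.choose_zero_right, Nat.cast_one, one_mul] at h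
  have hpt : ∀ j ∈ Icc 1 N, (N.choose j : ℝ) * (-1 : ℝ) ^ (j - 1)
      = -((-1 : ℝ) ^ j * (N.choose j : ℝ)) := by
    intro j hj
    simp only [mem_Icc] at hj
    have hj' : j - 1 + 1 = j := by omega
    have hpow : (-1 : ℝ) ^ j = -(-1 : ℝ) ^ (j - 1) := by
      conv_lhs => rw [← hj']
      rw [pow_succ]; ring
    rw [hpow]; ring
  rw [Finset.sum_congr rfl hpt, Finset.sum_neg_distrib]
  linarith

lemma Tzs_one (n : ℕ) (hn : 1 ≤ n) : Tzs n 1 = ∑ m ∈ Icc 1 n, (1 / (m : ℝ)) := by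
  induction n with
  | zero => omega
  | succ N ih =>
    rcases Nat.lt_or_ge N 1 with h | hN
    · interval_cases N
      norm_num [Tzs]
    · have hstep : Tzs (N + 1) 1 = Tzs N 1 + 1 / ((N : ℝ) + 1) := by
        rw [Tzs, Tzs]
        have split : ∀ j ∈ Icc 1 (N + 1),
            ((N + 1).choose j : ℝ) * (-1 : ℝ) ^ (j - 1) / (j : ℝ) ^ 1
              = (N.choose j : ℝ) * (-1 : ℝ) ^ (j - 1) / (j : ℝ) ^ 1
                + ((N + 1).choose j : ℝ) * (-1 : ℝ) ^ (j - 1) / ((N : ℝ) + 1) := by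
          intro j hj
          simp only [mem_Icc] at hj
          have hj1 : 1 ≤ j := hj.1
          have keyN : (N + 1) * N.choose (j - 1) = (N + 1).choose j * j := by
            have h := Nat.add_one_mul_choose_eq N (j - 1)
            rwa [show j - 1 + 1 = j by omega] at h
          have key : ((N : ℝ) + 1) * (N.choose (j - 1) : ℝ)
              = ((N + 1).choose j : ℝ) * (j : ℝ) := by exact_mod_cast keyN
          have hchoose : ((N + 1).choose j : ℝ) = (N.choose j : ℝ) + (N.choose (j - 1) : ℝ) := by
            have h := Nat.choose_succ_succ N (j - 1)
            simp only [Nat.succ_eq_add_one] at h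
            rw [show j - 1 + 1 = j by omega] at h
            rw [h]; push_cast; ring
          have hjne : (j : ℝ) ≠ 0 := by positivity
          have hNne : (N : ℝ) + 1 ≠ 0 := by positivity
          simp only [pow_one]
          rw [div_add_div _ _ hjne hNne, div_eq_div_iff hjne (by positivity)]
          linear_combination ((-1 : ℝ) ^ (j - 1) * (j : ℝ)) * key
            + ((-1 : ℝ) ^ (j - 1) * (j : ℝ) * ((N : ℝ) + 1)) * hchoose
        rw [Finset.sum_congr rfl split, Finset.sum_add_distrib]
        congr 1
        · rw [Finset.sum_Icc_succ_top (by omega : 1 ≤ N + 1)]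
          simp [Nat.choose_eq_zero_of_lt (show N < N + 1 by omega)]
        · rw [← Finset.sum_div, alt_sum_choose (N + 1) (by omega)]
      rw [hstep, ih hN, Finset.sum_Icc_succ_top (by omega : 1 ≤ N + 1)]
      push_cast
      ring

lemma sum_Icc_comm (n : ℕ) (f : ℕ → ℕ → ℝ) :
    ∑ m ∈ Icc 1 n, ∑ j ∈ Icc 1 m, f m j = ∑ j ∈ Icc 1 n, ∑ m ∈ Icc j n, f m j := by
  rw [Finset.sum_sigma', Finset.sum_sigma']
  refine Finset.sum_nbij' (fun x => ⟨x.2, x.1⟩) (fun x => ⟨x.2, x.1⟩) ?_ ?_ (fun _ _ => rfl)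
    (fun _ _ => rfl) (fun _ _ => rfl) <;>
  · simp only [Finset.mem_sigma, Finset.mem_Icc, Sigma.forall]
    intro a b hb
    omega

lemma Tzs_succ (n k : ℕ) (hn : 1 ≤ n) :
    ∑ m ∈ Icc 1 n, (1 / (m : ℝ)) * Tzs m k = Tzs n (k + 1) := by
  have hL : ∑ m ∈ Icc 1 n, (1 / (m : ℝ)) * Tzs m k
      = ∑ m ∈ Icc 1 n, ∑ j ∈ Icc 1 m,
          (1 / (m : ℝ)) * ((m.choose j : ℝ) * (-1 : ℝ) ^ (j - 1) / (j : ℝ) ^ k) := by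
    simp [Tzs, Finset.mul_sum]
  rw [hL, sum_Icc_comm, Tzs]
  refine Finset.sum_congr rfl ?_
  intro j hj
  simp only [mem_Icc] at hj
  obtain ⟨hj1, hjn⟩ := hj
  have hstep : ∀ m ∈ Icc j n,
      (1 / (m : ℝ)) * ((m.choose j : ℝ) * (-1 : ℝ) ^ (j - 1) / (j : ℝ) ^ k)
        = ((m - 1).choose (j - 1) : ℝ) * ((-1 : ℝ) ^ (j - 1) / (j : ℝ) ^ (k + 1)) := by
    intro m hm
    simp only [mem_Icc] at hm
    have hm1 : 1 ≤ m := le_trans hj1 hm.1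
    have keyN : m * (m - 1).choose (j - 1) = m.choose j * j := by
      have h := Nat.add_one_mul_choose_eq (m - 1) (j - 1)
      rwa [show m - 1 + 1 = m by omega, show j - 1 + 1 = j by omega] at h
    have key : (m : ℝ) * ((m - 1).choose (j - 1) : ℝ) = (m.choose j : ℝ) * (j : ℝ) := by
      exact_mod_cast keyN
    have hmne : (m : ℝ) ≠ 0 := by
      simpa using (by omega : m ≠ 0)
    have hjne : (j : ℝ) ≠ 0 := by
      simpa using (by omega : j ≠ 0)
    have hb : ((m - 1).choose (j - 1) : ℝ) = (m.choose j : ℝ) * (j : ℝ) / (m : ℝ) := by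
      rw [eq_div_iff hmne]; linarith [key]
    rw [hb, pow_succ]
    field_simp
  rw [Finset.sum_congr rfl hstep, ← Finset.sum_mul]
  have hhs : ∑ m ∈ Icc j n, ((m - 1).choose (j - 1) : ℝ) = (n.choose j : ℝ) := by
    have hre : ∑ m ∈ Icc j n, ((m - 1).choose (j - 1) : ℕ)
        = ∑ i ∈ Icc (j - 1) (n - 1), (i.choose (j - 1) : ℕ) := by
      refine Finset.sum_nbij' (fun m => m - 1) (fun i => i + 1) ?_ ?_ ?_ ?_ ?_
      · intro a ha; simp only [Finset.mem_Icc] at *; omega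
      · intro a ha; simp only [Finset.mem_Icc] at *; omega
      · intro a ha; simp only [Finset.mem_Icc] at ha; show a - 1 + 1 = a; omega
      · intro a ha; rfl
      · intro a ha; rfl
    have := Nat.sum_Icc_choose (n - 1) (j - 1)
    rw [show n - 1 + 1 = n by omega, show j - 1 + 1 = j by omega] at this
    rw [← Nat.cast_sum, hre, this]
  rw [hhs]
  ring

theorem zeta_star_binomial_sum (n k : ℕ) (hn : 1 ≤ n) (hk : 1 ≤ k) :
    (∑ ℓ ∈ multisetTuples n k, ∏ i, (1 : ℝ) / (ℓ i : ℝ)) =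
      ∑ j ∈ Finset.Icc 1 n, (n.choose j : ℝ) * (-1 : ℝ) ^ (j - 1) / (j : ℝ) ^ k := by
  have main : ∀ k' n', 1 ≤ n' → Szs n' (k' + 1) = Tzs n' (k' + 1) := by
    intro k'
    induction k' with
    | zero =>
      intro n' hn'
      rw [Szs_succ, Tzs_one n' hn']
      refine Finset.sum_congr rfl ?_
      intro m _
      rw [Szs_zero, mul_one]
    | succ K ih =>
      intro n' hn'
      rw [Szs_succ, ← Tzs_succ n' (K + 1) hn']
      refine Finset.sum_congr rfl ?_
      intro m hm
      simp only [mem_Icc] at hm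
      rw [ih m hm.1]
  obtain ⟨k', rfl⟩ : ∃ k', k = k' + 1 := ⟨k - 1, by omega⟩
  exact main k' n hn
end

section
/- For all n ≥ 1 and k ≥ 1, the interpolated truncated multiple zeta value at t = 1/2 satisfies ζ^{1/2}_n({1}_k) := ∑_{n ≥ ℓ_1 ≥ ... ≥ ℓ_k ≥ 1} (1/2)^{σ(ℓ)} / (ℓ_1···ℓ_k) = (1/2^k) ∑_{j=1}^{n} C(n+j, j) C(n, j) (-1)^{j-1} / j^k. -/
namespace ZetaHalfAux

open Finset

lemma sub_mul_choose (a b : ℕ) : (a - b) * a.choose b = a * (a-1).choose b := by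
  rcases Nat.lt_or_ge a b with h | h
  · rw [Nat.choose_eq_zero_of_lt h, Nat.choose_eq_zero_of_lt (by omega)]
    simp
  · match a, h with
    | 0, h => simp
    | a'+1, h =>
      rcases Nat.lt_or_ge a' b with h2 | h2
      · have hb : b = a' + 1 := by omega
        subst hb
        simp [Nat.choose_eq_zero_of_lt (Nat.lt_succ_self a')]
      · have e1 : (a'+1).choose b = (a'+1).choose (a'+1-b) := (Nat.choose_symm h).symm
        have e2 : a'.choose (a'-b) = a'.choose b := Nat.choose_symm h2
        have e3 := Nat.add_one_mul_choose_eq a' (a'-b)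
        have e4 : a' - b + 1 = a' + 1 - b := by omega
        rw [e1, ← e4, mul_comm, ← e3, e2]
        simp [Nat.add_sub_cancel, mul_comm]

noncomputable def Ar (m j : ℕ) : ℝ := ((m + j).choose j : ℝ) * (m.choose j : ℝ)

lemma key (m j : ℕ) (hm : 1 ≤ m) :
    (j:ℝ) * (Ar m j + Ar (m-1) j) = (m:ℝ) * (Ar m j - Ar (m-1) j) := by
  rcases Nat.lt_or_ge m j with h | hj
  · have h1 : m.choose j = 0 := Nat.choose_eq_zero_of_lt h
    have h2 : (m-1).choose j = 0 := Nat.choose_eq_zero_of_lt (by omega)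
    simp [Ar, h1, h2]
  · have h1 := sub_mul_choose m j
    have h2 := sub_mul_choose (m+j) j
    rw [Nat.add_sub_cancel] at h2
    have e : m + j - 1 = (m-1) + j := by omega
    rw [e] at h2
    have c1 : ((m:ℝ) - j) * (m.choose j : ℝ) = (m:ℝ) * ((m-1).choose j : ℝ) := by
      have := congrArg (Nat.cast : ℕ → ℝ) h1
      push_cast [Nat.cast_sub hj] at this
      exact this
    have c2 : (m:ℝ) * ((m+j).choose j : ℝ) = ((m:ℝ) + j) * (((m-1)+j).choose j : ℝ) := by
      exact_mod_cast congrArg (Nat.cast : ℕ → ℝ) h2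
    unfold Ar
    linear_combination (-((m+j).choose j : ℝ)) * c1 + (-((m-1).choose j : ℝ)) * c2

lemma Bsum (n : ℕ) :
    ∑ j ∈ range (n+1), (-1:ℤ)^j * ((n+j).choose j) * (n.choose j) = (-1)^n := by
  have step1 : ∀ j, j ∈ range (n+1) →
      (-1:ℤ)^j * ((n+j).choose j) * (n.choose j)
        = ∑ i ∈ range (j+1), (-1:ℤ)^j * ((n.choose i) * (j.choose i)) * (n.choose j) := by
    intro j hj
    rw [Nat.add_choose_eq n j j, Finset.Nat.sum_antidiagonal_eq_sum_range_succ_mk]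
    push_cast [Finset.sum_mul, Finset.mul_sum]
    refine Finset.sum_congr rfl fun i hi => ?_
    rw [mem_range] at hi
    rw [Nat.choose_symm (by omega : i ≤ j)]
  rw [Finset.sum_congr rfl step1]
  rw [Finset.sum_comm' (t' := range (n+1)) (s' := fun i => Icc i n)
    (by intro j i; simp only [mem_range, mem_Icc]; omega)]
  have step2 : ∀ i, i ∈ range (n+1) →
      ∑ j ∈ Icc i n, (-1:ℤ)^j * ((n.choose i) * (j.choose i)) * (n.choose j)
        = ((n.choose i : ℤ))^2 * ((-1)^i * (if n - i = 0 then 1 else 0)) := by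
    intro i hi
    rw [mem_range] at hi
    have : ∀ j ∈ Icc i n, (-1:ℤ)^j * ((n.choose i) * (j.choose i)) * (n.choose j)
        = ((n.choose i : ℤ))^2 * ((-1)^j * ((n-i).choose (j-i))) := by
      intro j hj
      rw [mem_Icc] at hj
      have h := Nat.choose_mul (n := n) (hj.1)
      have hc : ((n.choose j : ℤ)) * (j.choose i) = (n.choose i) * ((n-i).choose (j-i)) := by
        exact_mod_cast congrArg (Nat.cast : ℕ → ℤ) h
      linear_combination ((-1:ℤ)^j * (n.choose i)) * hc
    rw [Finset.sum_congr rfl this, ← Finset.mul_sum]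
    congr 1
    have : Icc i n = Ico i (n+1) := by rw [Finset.Ico_add_one_right_eq_Icc]
    rw [this, Finset.sum_Ico_eq_sum_range]
    have hni : n + 1 - i = (n - i) + 1 := by omega
    rw [hni]
    have : ∀ d ∈ range ((n-i)+1), (-1:ℤ)^(i+d) * ((n-i).choose ((i+d)-i))
        = (-1:ℤ)^i * ((-1)^d * ((n-i).choose d)) := by
      intro d hd
      rw [Nat.add_sub_cancel_left, pow_add]
      ring
    rw [Finset.sum_congr rfl this, ← Finset.mul_sum, Int.alternating_sum_range_choose]
  rw [Finset.sum_congr rfl step2]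
  rw [Finset.sum_eq_single n]
  · simp
  · intro i hi hne
    rw [mem_range] at hi
    rw [if_neg (by omega)]
    ring
  · intro h; simp at h

lemma BsumIcc (n : ℕ) :
    ∑ j ∈ Icc 1 n, (-1:ℝ)^(j-1) * Ar n j = 1 - (-1)^n := by
  have h := congrArg (Int.cast : ℤ → ℝ) (Bsum n)
  push_cast at h
  have hr : range (n+1) = insert 0 (Icc 1 n) := by
    ext x; simp [mem_range, mem_Icc]; omega
  rw [hr, Finset.sum_insert (by simp)] at h
  simp only [pow_zero, Nat.choose_zero_right, Nat.cast_one, one_mul, Nat.add_zero] at h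
  have e : ∀ j ∈ Icc 1 n, (-1:ℝ)^(j-1) * Ar n j
      = -((-1:ℝ)^j * ((n+j).choose j : ℝ) * ((n.choose j : ℝ))) := by
    intro j hj
    rw [mem_Icc] at hj
    have hj1 : j = (j - 1) + 1 := by omega
    rw [hj1, pow_succ, Nat.add_sub_cancel, Ar]
    ring
  rw [Finset.sum_congr rfl e, Finset.sum_neg_distrib]
  linarith [h]

lemma harmonic (n : ℕ) :
    ∑ j ∈ Icc 1 n, (-1:ℝ)^(j-1) * Ar n j / j = 2 * ∑ m ∈ Icc 1 n, (1:ℝ)/m := by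
  induction n with
  | zero => simp
  | succ n ih =>
    have hAz : Ar n (n+1) = 0 := by
      simp [Ar, Nat.choose_eq_zero_of_lt (Nat.lt_succ_self n)]
    have hext : ∑ j ∈ Icc 1 (n+1), (-1:ℝ)^(j-1) * Ar n j / j
        = ∑ j ∈ Icc 1 n, (-1:ℝ)^(j-1) * Ar n j / j := by
      rw [Finset.sum_Icc_succ_top (by omega : 1 ≤ n + 1)]
      simp [hAz]
    have hB1 : ∑ j ∈ Icc 1 (n+1), (-1:ℝ)^(j-1) * Ar (n+1) j = 1 - (-1)^(n+1) :=
      BsumIcc (n+1)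
    have hB2 : ∑ j ∈ Icc 1 (n+1), (-1:ℝ)^(j-1) * Ar n j = 1 - (-1)^n := by
      rw [Finset.sum_Icc_succ_top (by omega : 1 ≤ n + 1)]
      simp only [hAz, mul_zero, add_zero]
      exact BsumIcc n
    have hterm : ∀ j ∈ Icc 1 (n+1),
        (-1:ℝ)^(j-1) * Ar (n+1) j / j
          = (-1:ℝ)^(j-1) * Ar n j / j
            + ((-1:ℝ)^(j-1) * Ar (n+1) j + (-1:ℝ)^(j-1) * Ar n j) / (n+1) := by
      intro j hj
      rw [mem_Icc] at hj
      have hkey := key (n+1) j (by omega)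
      simp only [Nat.add_sub_cancel] at hkey
      have hj0 : (j:ℝ) ≠ 0 := Nat.cast_ne_zero.mpr (by omega)
      have hn0 : ((n:ℝ)+1) ≠ 0 := by positivity
      push_cast at hkey ⊢
      have hkey' : (Ar (n+1) j - Ar n j) / (j:ℝ) = (Ar (n+1) j + Ar n j) / ((n:ℝ)+1) :=
        (div_eq_div_iff hj0 hn0).mpr (by linear_combination -hkey)
      have hsplit : (-1:ℝ)^(j-1) * Ar (n+1) j / j
          = (-1:ℝ)^(j-1)*Ar n j / j + (-1:ℝ)^(j-1) * ((Ar (n+1) j - Ar n j)/(j:ℝ)) := by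
        ring
      rw [hsplit, hkey']
      ring
    rw [Finset.sum_congr rfl hterm, Finset.sum_add_distrib, hext, ih,
      Finset.sum_Icc_succ_top (by omega : 1 ≤ n + 1) (fun m => (1:ℝ)/m)]
    rw [← Finset.sum_div, Finset.sum_add_distrib, hB1, hB2]
    rw [pow_succ]
    push_cast
    field_simp
    ring

noncomputable def Rf (n k : ℕ) : ℝ :=
  (1/2^k) * ∑ j ∈ Icc 1 n, Ar n j * (-1:ℝ)^(j-1) / (j:ℝ)^k

lemma Ar_zero {m j : ℕ} (h : m < j) : Ar m j = 0 := by
  simp [Ar, Nat.choose_eq_zero_of_lt h]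

lemma Rext (k : ℕ) {m n : ℕ} (h : m ≤ n) :
    ∑ j ∈ Icc 1 m, Ar m j * (-1:ℝ)^(j-1)/(j:ℝ)^k
      = ∑ j ∈ Icc 1 n, Ar m j * (-1:ℝ)^(j-1)/(j:ℝ)^k := by
  refine Finset.sum_subset (Finset.Icc_subset_Icc_right h) fun j hj hnj => ?_
  rw [mem_Icc] at hj hnj
  rw [Ar_zero (by omega)]
  simp

lemma telescope (j n : ℕ) (hj : 1 ≤ j) :
    ∑ m ∈ Icc 1 n, (Ar m j - Ar (m-1) j) = Ar n j := by
  have h0 : Ar 0 j = 0 := Ar_zero (by omega)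
  rw [← Finset.Ico_add_one_right_eq_Icc, Finset.sum_Ico_eq_sum_range]
  have e1 : n + 1 - 1 = n := by omega
  rw [e1]
  have e2 : ∀ i ∈ range n, (Ar (1+i) j - Ar (1+i-1) j) = (Ar (i+1) j - Ar i j) := by
    intro i _
    have : 1 + i - 1 = i := by omega
    rw [this, Nat.add_comm 1 i]
  rw [Finset.sum_congr rfl e2, Finset.sum_range_sub (fun m => Ar m j), h0, sub_zero]

lemma R_rec (n k : ℕ) :
    ∑ m ∈ Icc 1 n, 1/(2*(m:ℝ)) * (Rf m k + Rf (m-1) k) = Rf n (k+1) := by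
  have hmain : ∀ m ∈ Icc 1 n, 1/(2*(m:ℝ)) * (Rf m k + Rf (m-1) k)
      = ∑ j ∈ Icc 1 n,
          (1/2^(k+1)) * ((Ar m j - Ar (m-1) j) * (-1:ℝ)^(j-1)/(j:ℝ)^k/(j:ℝ)) := by
    intro m hm
    rw [mem_Icc] at hm
    rw [Rf, Rf, Rext k hm.2, Rext k (le_trans (Nat.sub_le m 1) hm.2)]
    rw [← mul_add, ← Finset.sum_add_distrib, Finset.mul_sum, Finset.mul_sum]
    refine Finset.sum_congr rfl fun j hj => ?_
    rw [mem_Icc] at hj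
    have hkey := key m j hm.1
    have hj0 : (j:ℝ) ≠ 0 := Nat.cast_ne_zero.mpr (by omega)
    have hm0 : (m:ℝ) ≠ 0 := Nat.cast_ne_zero.mpr (by omega)
    have hkey' : (Ar m j + Ar (m-1) j) / (m:ℝ) = (Ar m j - Ar (m-1) j) / (j:ℝ) :=
      (div_eq_div_iff hm0 hj0).mpr (by linear_combination hkey)
    have hsplit : (1:ℝ)/(2*(m:ℝ)) * (1/2^k * (Ar m j * (-1:ℝ)^(j-1)/(j:ℝ)^k + Ar (m-1) j * (-1:ℝ)^(j-1)/(j:ℝ)^k))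
        = 1/2^(k+1) * ((-1:ℝ)^(j-1)/(j:ℝ)^k) * ((Ar m j + Ar (m-1) j) / (m:ℝ)) := by
      ring
    rw [hsplit, hkey']
    ring
  rw [Finset.sum_congr rfl hmain, Finset.sum_comm]
  rw [Rf, Finset.mul_sum]
  refine Finset.sum_congr rfl fun j hj => ?_
  rw [mem_Icc] at hj
  have ht := telescope j n hj.1
  have e : ∀ m ∈ Icc 1 n, (1:ℝ)/2^(k+1) * ((Ar m j - Ar (m-1) j) * (-1:ℝ)^(j-1)/(j:ℝ)^k/(j:ℝ))
      = (Ar m j - Ar (m-1) j) * (1/2^(k+1) * ((-1:ℝ)^(j-1)/(j:ℝ)^(k+1))) := by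
    intro m _
    rw [pow_succ]
    ring
  rw [Finset.sum_congr rfl e, ← Finset.sum_mul, ht]
  ring

lemma mem_mT {n k : ℕ} {ℓ : Fin k → ℕ} :
    ℓ ∈ multisetTuples n k ↔
      (∀ i, 1 ≤ ℓ i ∧ ℓ i ≤ n) ∧ ∀ i j : Fin k, i ≤ j → ℓ j ≤ ℓ i := by
  simp [multisetTuples, Fintype.mem_piFinset, Finset.mem_Icc]

lemma sigmaEq_succ {k : ℕ} (ℓ : Fin (k+1) → ℕ) :
    sigmaEq ℓ = ((univ : Finset (Fin k)).filter
      fun i => ℓ i.castSucc = ℓ i.succ).card := by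
  rw [sigmaEq]
  refine (Finset.card_nbij (i := fun i : Fin k => (i.castSucc, i.succ)) ?_ ?_ ?_).symm
  · intro i hi
    rw [Finset.mem_coe, Finset.mem_filter] at hi ⊢
    exact ⟨Finset.mem_univ _, by simp, hi.2⟩
  · intro a _ b _ hab
    have : a.castSucc = b.castSucc := congrArg Prod.fst hab
    exact Fin.castSucc_injective _ this
  · intro p hp
    simp only [Finset.coe_filter, Set.mem_setOf_eq, Finset.mem_univ, true_and] at hp ⊢
    obtain ⟨h1, h2⟩ := hp
    have hlt : (p.1 : ℕ) < k := by
      have := p.2.isLt; omega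
    refine ⟨⟨(p.1 : ℕ), hlt⟩, ?_, ?_⟩
    · have e1 : (⟨(p.1 : ℕ), hlt⟩ : Fin k).castSucc = p.1 := by apply Fin.ext; simp
      have e2 : (⟨(p.1 : ℕ), hlt⟩ : Fin k).succ = p.2 := by apply Fin.ext; simp [h1.symm]
      simp only [Set.mem_setOf_eq]
      rw [e1, e2]; exact h2
    · have e1 : (⟨(p.1 : ℕ), hlt⟩ : Fin k).castSucc = p.1 := by apply Fin.ext; simp
      have e2 : (⟨(p.1 : ℕ), hlt⟩ : Fin k).succ = p.2 := by apply Fin.ext; simp [h1.symm]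
      exact Prod.ext e1 e2

lemma sigmaEq_one (ℓ : Fin 1 → ℕ) : sigmaEq ℓ = 0 := by
  rw [sigmaEq_succ]
  simp

lemma sigmaEq_cons {k : ℕ} (m : ℕ) (t : Fin (k+1) → ℕ) :
    sigmaEq (Fin.cons m t : Fin (k+2) → ℕ)
      = sigmaEq t + (if t 0 = m then 1 else 0) := by
  rw [sigmaEq_succ (Fin.cons m t : Fin (k+2) → ℕ), sigmaEq_succ t,
    Finset.card_filter, Finset.card_filter, Fin.sum_univ_succ]
  have e2 : ∀ i : Fin k, (Fin.cons m t : Fin (k+2) → ℕ) (i.succ.castSucc) = t i.castSucc :=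
    fun i => by rw [show i.succ.castSucc = i.castSucc.succ from rfl, Fin.cons_succ]
  simp only [e2, Fin.cons_succ, Fin.castSucc_zero, Fin.cons_zero]
  rw [add_comm]
  congr 1
  simp [eq_comm]

lemma cons_mem {n k : ℕ} {m : ℕ} {t : Fin k → ℕ} (hm : m ∈ Icc 1 n)
    (ht : t ∈ multisetTuples m k) :
    (Fin.cons m t : Fin (k+1) → ℕ) ∈ multisetTuples n (k+1) := by
  rw [mem_Icc] at hm
  rw [mem_mT] at ht ⊢
  obtain ⟨hb, hmono⟩ := ht
  constructor
  · intro i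
    refine Fin.cases ?_ ?_ i
    · simpa using hm
    · intro j
      rw [Fin.cons_succ]
      exact ⟨(hb j).1, le_trans (hb j).2 hm.2⟩
  · intro i
    refine Fin.cases ?_ (fun i' => ?_) i
    · intro j _
      refine Fin.cases ?_ (fun j' => ?_) j
      · exact le_rfl
      · simp only [Fin.cons_succ, Fin.cons_zero]
        exact (hb j').2
    · intro j hij
      refine Fin.cases
        (motive := fun j => i'.succ ≤ j →
          (Fin.cons m t : Fin (k+1) → ℕ) j ≤ (Fin.cons m t : Fin (k+1) → ℕ) i'.succ)
        ?_ (fun j' => ?_) j hij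
      · intro h0
        exact absurd (Fin.le_zero_iff.mp h0) (Fin.succ_ne_zero i')
      · intro hs
        simp only [Fin.cons_succ]
        exact hmono i' j' (by rwa [Fin.succ_le_succ_iff] at hs)

lemma tail_mem {n k : ℕ} {ℓ : Fin (k+1) → ℕ} (hℓ : ℓ ∈ multisetTuples n (k+1)) :
    ℓ 0 ∈ Icc 1 n ∧ Fin.tail ℓ ∈ multisetTuples (ℓ 0) k := by
  rw [mem_mT] at hℓ
  obtain ⟨hb, hmono⟩ := hℓ
  refine ⟨by rw [mem_Icc]; exact hb 0, ?_⟩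
  rw [mem_mT]
  constructor
  · intro i
    exact ⟨(hb i.succ).1, hmono 0 i.succ (Fin.zero_le _)⟩
  · intro i j hij
    exact hmono i.succ j.succ (Fin.succ_le_succ_iff.mpr hij)

lemma cons_sum (n k : ℕ) (F : (Fin (k+1) → ℕ) → ℝ) :
    ∑ ℓ ∈ multisetTuples n (k+1), F ℓ
      = ∑ m ∈ Icc 1 n, ∑ t ∈ multisetTuples m k, F (Fin.cons m t) := by
  rw [← Finset.sum_sigma (Icc 1 n) (fun m => multisetTuples m k)
    (fun p => F (Fin.cons p.1 p.2))]
  refine Finset.sum_nbij'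
    (i := fun ℓ => (⟨ℓ 0, Fin.tail ℓ⟩ : Σ _ : ℕ, (Fin k → ℕ)))
    (j := fun p => (Fin.cons p.1 p.2 : Fin (k+1) → ℕ)) ?_ ?_ ?_ ?_ ?_
  · intro ℓ hℓ
    rw [Finset.mem_sigma]
    exact ⟨(tail_mem hℓ).1, (tail_mem hℓ).2⟩
  · intro p hp
    rw [Finset.mem_sigma] at hp
    exact cons_mem hp.1 hp.2
  · intro ℓ hℓ
    exact Fin.cons_self_tail ℓ
  · intro p hp
    apply Sigma.ext
    · simp
    · simp [Fin.tail_cons]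
  · intro ℓ hℓ
    rw [Fin.cons_self_tail ℓ]

noncomputable def Lfun (n k : ℕ) : ℝ :=
  ∑ ℓ ∈ multisetTuples n k, (1/2:ℝ)^(sigmaEq ℓ) * ∏ i, (1:ℝ)/(ℓ i : ℝ)

lemma mT_zero (m : ℕ) : multisetTuples m 0 = {![]} := by
  ext t
  simp only [Finset.mem_singleton]
  constructor
  · intro _; exact Subsingleton.elim t ![]
  · intro _; rw [mem_mT]; exact ⟨fun i => i.elim0, fun i => i.elim0⟩

lemma L_one (n : ℕ) : Lfun n 1 = ∑ m ∈ Icc 1 n, (1:ℝ)/m := by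
  rw [Lfun, cons_sum n 0]
  refine Finset.sum_congr rfl fun m hm => ?_
  rw [mT_zero, Finset.sum_singleton, sigmaEq_one, pow_zero, one_mul, Fin.prod_univ_one]
  simp

lemma L_rec (n k : ℕ) : Lfun n (k+2)
    = ∑ m ∈ Icc 1 n, 1/(2*(m:ℝ)) * (Lfun m (k+1) + Lfun (m-1) (k+1)) := by
  rw [Lfun, cons_sum n (k+1)]
  refine Finset.sum_congr rfl fun m hm => ?_
  rw [mem_Icc] at hm
  have hterm : ∀ t ∈ multisetTuples m (k+1),
      (1/2:ℝ)^(sigmaEq (Fin.cons m t : Fin (k+2) → ℕ))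
          * ∏ i, (1:ℝ)/(((Fin.cons m t : Fin (k+2) → ℕ) i) : ℝ)
        = (1/(m:ℝ)) * ((if t 0 = m then (1/2:ℝ) else 1)
            * ((1/2:ℝ)^(sigmaEq t) * ∏ i, (1:ℝ)/(t i : ℝ))) := by
    intro t ht
    rw [sigmaEq_cons, pow_add, Fin.prod_univ_succ]
    simp only [Fin.cons_zero, Fin.cons_succ]
    by_cases h : t 0 = m <;> simp only [h, if_pos, if_neg, ite_true, ite_false] <;> ring
  rw [Finset.sum_congr rfl hterm, ← Finset.mul_sum]
  have hfil : (multisetTuples m (k+1)).filter (fun t => ¬ t 0 = m)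
      = multisetTuples (m-1) (k+1) := by
    ext t
    rw [Finset.mem_filter, mem_mT, mem_mT]
    constructor
    · rintro ⟨⟨hb, hmono⟩, hne⟩
      have h0 : t 0 ≤ m - 1 := by have := (hb 0).2; omega
      exact ⟨fun i => ⟨(hb i).1, le_trans (hmono 0 i (Fin.zero_le i)) h0⟩, hmono⟩
    · rintro ⟨hb, hmono⟩
      refine ⟨⟨fun i => ⟨(hb i).1, le_trans (hb i).2 (by omega)⟩, hmono⟩, ?_⟩
      have := (hb 0).2
      omega
  have hsplit2 := Finset.sum_filter_add_sum_filter_not (multisetTuples m (k+1))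
    (fun t => t 0 = m) (fun t => (1/2:ℝ)^(sigmaEq t) * ∏ i, (1:ℝ)/(t i : ℝ))
  have hsplit := Finset.sum_filter_add_sum_filter_not (multisetTuples m (k+1))
    (fun t => t 0 = m)
    (fun t => (if t 0 = m then (1/2:ℝ) else 1) * ((1/2:ℝ)^(sigmaEq t) * ∏ i, (1:ℝ)/(t i : ℝ)))
  have h1 : ∑ t ∈ (multisetTuples m (k+1)).filter (fun t => t 0 = m),
      (if t 0 = m then (1/2:ℝ) else 1) * ((1/2:ℝ)^(sigmaEq t) * ∏ i, (1:ℝ)/(t i : ℝ))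
      = (1/2:ℝ) * ∑ t ∈ (multisetTuples m (k+1)).filter (fun t => t 0 = m),
          (1/2:ℝ)^(sigmaEq t) * ∏ i, (1:ℝ)/(t i : ℝ) := by
    rw [Finset.mul_sum]
    refine Finset.sum_congr rfl fun t ht => ?_
    rw [Finset.mem_filter] at ht
    rw [if_pos ht.2]
  have h2 : ∑ t ∈ (multisetTuples m (k+1)).filter (fun t => ¬ t 0 = m),
      (if t 0 = m then (1/2:ℝ) else 1) * ((1/2:ℝ)^(sigmaEq t) * ∏ i, (1:ℝ)/(t i : ℝ))
      = Lfun (m-1) (k+1) := by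
    rw [Finset.sum_congr rfl (fun t ht => ?_), hfil]
    · rfl
    · rw [Finset.mem_filter] at ht
      rw [if_neg ht.2, one_mul]
  have h3 : ∑ t ∈ (multisetTuples m (k+1)).filter (fun t => ¬ t 0 = m),
      (1/2:ℝ)^(sigmaEq t) * ∏ i, (1:ℝ)/(t i : ℝ) = Lfun (m-1) (k+1) := by
    rw [hfil]; rfl
  rw [← hsplit, h1, h2]
  rw [h3] at hsplit2
  have h4 : ∑ t ∈ (multisetTuples m (k+1)).filter (fun t => t 0 = m),
      (1/2:ℝ)^(sigmaEq t) * ∏ i, (1:ℝ)/(t i : ℝ)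
      = Lfun m (k+1) - Lfun (m-1) (k+1) := by
    have : Lfun m (k+1) = ∑ t ∈ multisetTuples m (k+1),
        (1/2:ℝ)^(sigmaEq t) * ∏ i, (1:ℝ)/(t i : ℝ) := rfl
    rw [this, ← hsplit2]
    ring
  rw [h4]
  ring

lemma Lfun_eq_Rf : ∀ k n : ℕ, Lfun n (k+1) = Rf n (k+1) := by
  intro k
  induction k with
  | zero =>
    intro n
    rw [L_one, Rf]
    have e : ∀ j ∈ Icc 1 n, Ar n j * (-1:ℝ)^(j-1)/(j:ℝ)^(0+1)
        = (-1:ℝ)^(j-1) * Ar n j / (j:ℝ) := by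
      intro j _; rw [pow_one]; ring
    rw [Finset.sum_congr rfl e, harmonic n]
    ring
  | succ k ih =>
    intro n
    rw [L_rec n k, ← R_rec n (k+1)]
    refine Finset.sum_congr rfl fun m hm => ?_
    rw [ih m, ih (m-1)]

end ZetaHalfAux

theorem zeta_half_binomial_sum (n k : ℕ) (hn : 1 ≤ n) (hk : 1 ≤ k) :
    (∑ ℓ ∈ multisetTuples n k, (1 / 2 : ℝ) ^ sigmaEq ℓ * ∏ i, (1 : ℝ) / (ℓ i : ℝ)) =
      (1 / 2 ^ k : ℝ) *
        ∑ j ∈ Finset.Icc 1 n,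
          ((n + j).choose j : ℝ) * (n.choose j : ℝ) * (-1 : ℝ) ^ (j - 1) / (j : ℝ) ^ k := by
  obtain ⟨k2, rfl⟩ : ∃ k2, k = k2 + 1 := ⟨k - 1, by omega⟩
  have h := ZetaHalfAux.Lfun_eq_Rf k2 n
  rw [ZetaHalfAux.Lfun, ZetaHalfAux.Rf] at h
  simp only [ZetaHalfAux.Ar] at h
  exact h
end

section
/- For every n ≥ 1, the generating function identity holds as formal power series in z over the polynomial ring in t: ∏_{m=1}^{n}(1 + a_m z/(1 - a_m z t)) = exp(∑_{j ≥ 1} (z^j / j) · A_n(j) · (t^j - (t-1)^j)), where A_n(j) = ∑_{m=1}^{n} a_m^j. -/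
open PowerSeries Polynomial

/-- Exponential of a formal power series with zero constant term:
the coefficient of `z^n` in `exp F = ∑_k F^k / k!` (only `k ≤ n` contribute). -/
noncomputable def expPS (F : PowerSeries (Polynomial ℝ)) : PowerSeries (Polynomial ℝ) :=
  PowerSeries.mk fun n =>
    ∑ k ∈ Finset.range (n + 1), (k.factorial : ℝ)⁻¹ • PowerSeries.coeff n (F ^ k)

/-- The power sums `A_n(j) = ∑_{m=1}^n a_m^j`. -/
def powerSum (a : ℕ → ℝ) (n j : ℕ) : ℝ := ∑ m ∈ Finset.Icc 1 n, a m ^ j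

local notation "R" => Polynomial ℝ

-- coefficient of F^k vanishes below k when constant coeff is 0
lemma coeff_pow_zero_of_lt {F : PowerSeries R} (hF : PowerSeries.constantCoeff F = 0)
    {j k : ℕ} (h : j < k) : PowerSeries.coeff j (F ^ k) = 0 := by
  obtain ⟨g, rfl⟩ := X_dvd_iff.mpr hF
  rw [mul_pow, PowerSeries.coeff_X_pow_mul', if_neg (by omega)]

lemma coeff_expPS (F : PowerSeries R) (n : ℕ) :
    PowerSeries.coeff n (expPS F) =
      ∑ k ∈ Finset.range (n + 1), (k.factorial : ℝ)⁻¹ • PowerSeries.coeff n (F ^ k) := by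
  simp [expPS, coeff_mk]

lemma constantCoeff_expPS {F : PowerSeries R} (hF : PowerSeries.constantCoeff F = 0) :
    PowerSeries.constantCoeff (expPS F) = 1 := by
  rw [← coeff_zero_eq_constantCoeff_apply, coeff_expPS]
  simp [pow_succ]


lemma dmul (f g : PowerSeries R) :
    d⁄dX R (f * g) = d⁄dX R f * g + f * d⁄dX R g := by
  have := derivativeFun_mul f g
  simpa [smul_eq_mul, mul_comm, add_comm] using this

lemma derivative_pow' (F : PowerSeries R) (k : ℕ) :
    d⁄dX R (F ^ k) = (k : PowerSeries R) * (F ^ (k-1) * d⁄dX R F) := by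
  induction k with
  | zero => simp
  | succ k ih =>
      have h : F ^ (k + 1) = F * F ^ k := by ring
      rw [h, dmul, ih, Nat.succ_sub_one]
      rcases Nat.eq_zero_or_pos k with hk | hk
      · subst hk; simp
      · have h2 : F * (F ^ (k-1)) = F ^ k := by
          rw [← pow_succ', Nat.sub_add_cancel hk]
        push_cast
        rw [mul_comm ((d⁄dX R) F) (F^k), mul_left_comm F, ← mul_assoc F, h2]
        ring

lemma expPS_deriv {F : PowerSeries R} (hF : PowerSeries.constantCoeff F = 0) :
    d⁄dX R (expPS F) = d⁄dX R F * expPS F := by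
  refine PowerSeries.ext fun n => ?_
  rw [PowerSeries.coeff_derivative, coeff_expPS, Finset.sum_mul]
  have lhs_term : ∀ k : ℕ,
      ((k.factorial : ℝ)⁻¹ • PowerSeries.coeff (n+1) (F ^ k)) * ((n : R) + 1)
        = ((k.factorial : ℝ)⁻¹ * k) • PowerSeries.coeff n (F ^ (k-1) * d⁄dX R F) := by
    intro k
    rw [smul_mul_assoc, ← PowerSeries.coeff_derivative, derivative_pow']
    rw [show ((k : PowerSeries R) * (F ^ (k-1) * d⁄dX R F))
        = (k : ℕ) • (F ^ (k-1) * d⁄dX R F) by rw [nsmul_eq_mul]]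
    rw [map_nsmul, ← Nat.cast_smul_eq_nsmul ℝ, smul_smul]
  calc (∑ k ∈ Finset.range (n+1+1),
        ((k.factorial : ℝ)⁻¹ • PowerSeries.coeff (n+1) (F ^ k)) * ((n : R) + 1))
      = ∑ k ∈ Finset.range (n+1+1),
        ((k.factorial : ℝ)⁻¹ * k) • PowerSeries.coeff n (F ^ (k-1) * d⁄dX R F) := by
        exact Finset.sum_congr rfl fun k _ => lhs_term k
    _ = ∑ j ∈ Finset.range (n+1),
        (j.factorial : ℝ)⁻¹ • PowerSeries.coeff n (F ^ j * d⁄dX R F) := by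
        rw [Finset.sum_range_succ']
        simp only [Nat.cast_zero, mul_zero, zero_smul, add_zero, Nat.add_sub_cancel]
        refine Finset.sum_congr rfl fun j _ => ?_
        congr 1
        rw [Nat.factorial_succ]
        push_cast
        rw [mul_inv]
        field_simp
    _ = ∑ j ∈ Finset.range (n+1),
        (j.factorial : ℝ)⁻¹ • PowerSeries.coeff n (d⁄dX R F * F ^ j) := by
        simp_rw [mul_comm]
    _ = PowerSeries.coeff n (d⁄dX R F * expPS F) := by
        rw [PowerSeries.coeff_mul]
        have hrw : ∀ p ∈ Finset.HasAntidiagonal.antidiagonal n,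
            PowerSeries.coeff p.1 (d⁄dX R F) * PowerSeries.coeff p.2 (expPS F)
              = ∑ k ∈ Finset.range (n+1),
                (k.factorial : ℝ)⁻¹ • (PowerSeries.coeff p.1 (d⁄dX R F) * PowerSeries.coeff p.2 (F ^ k)) := by
          intro p hp
          rw [coeff_expPS]
          have hle : p.2 + 1 ≤ n + 1 := by
            have := Finset.HasAntidiagonal.antidiagonal.snd_le hp
            omega
          rw [Finset.sum_subset (Finset.range_subset_range.mpr hle) ?_]
          · rw [Finset.mul_sum]
            exact Finset.sum_congr rfl fun k _ => mul_smul_comm _ _ _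
          · intro k _ hk
            rw [coeff_pow_zero_of_lt hF (by simp at hk ⊢; omega), smul_zero]
        rw [Finset.sum_congr rfl hrw, Finset.sum_comm]
        refine Finset.sum_congr rfl fun k _ => ?_
        rw [← Finset.smul_sum, PowerSeries.coeff_mul]

lemma ode_unique {G E1 E2 : PowerSeries R}
    (h1 : d⁄dX R E1 = G * E1) (h2 : d⁄dX R E2 = G * E2)
    (h0 : PowerSeries.coeff 0 E1 = PowerSeries.coeff 0 E2) : E1 = E2 := by
  refine PowerSeries.ext fun n => ?_
  induction n using Nat.strong_induction_on with
  | _ n ih =>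
    match n with
    | 0 => exact h0
    | n + 1 =>
      have kd : PowerSeries.coeff n (d⁄dX R E1) = PowerSeries.coeff n (d⁄dX R E2) := by
        rw [h1, h2, PowerSeries.coeff_mul, PowerSeries.coeff_mul]
        refine Finset.sum_congr rfl fun p hp => ?_
        have : p.2 < n + 1 := by
          have := Finset.HasAntidiagonal.antidiagonal.snd_le hp; omega
        rw [ih p.2 this]
      rw [PowerSeries.coeff_derivative, PowerSeries.coeff_derivative] at kd
      have hne : ((n : R) + 1) ≠ 0 := by
        intro h
        have := congrArg (fun q => Polynomial.coeff q 0) h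
        simp at this
        exact (by positivity : (0:ℝ) < (n:ℝ)+1).ne' (by linarith)
      exact mul_right_cancel₀ hne kd

lemma expPS_add {F G : PowerSeries R} (hF : PowerSeries.constantCoeff F = 0)
    (hG : PowerSeries.constantCoeff G = 0) : expPS (F + G) = expPS F * expPS G := by
  refine ode_unique (G := d⁄dX R (F + G)) (expPS_deriv ?_) ?_ ?_
  · rw [map_add, hF, hG, add_zero]
  · rw [dmul, expPS_deriv hF, expPS_deriv hG, map_add]
    ring
  · rw [coeff_zero_eq_constantCoeff_apply, coeff_zero_eq_constantCoeff_apply,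
      constantCoeff_expPS, map_mul, constantCoeff_expPS, constantCoeff_expPS, mul_one] <;>
      simp [map_add, hF, hG]

lemma expPS_zero : expPS 0 = 1 := by
  refine PowerSeries.ext fun n => ?_
  rw [coeff_expPS]
  match n with
  | 0 => simp
  | n + 1 =>
    rw [PowerSeries.coeff_one, if_neg (by omega)]
    refine Finset.sum_eq_zero fun k _ => ?_
    match k with
    | 0 => simp [PowerSeries.coeff_one]
    | k + 1 => simp [zero_pow]

noncomputable def geomPS (p : R) : PowerSeries R := PowerSeries.mk fun n => p ^ n

noncomputable def LPS (p : R) : PowerSeries R :=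
  PowerSeries.mk fun j => if j = 0 then 0 else Polynomial.C ((j : ℝ))⁻¹ * p ^ j

lemma constantCoeff_LPS (p : R) : PowerSeries.constantCoeff (LPS p) = 0 := by
  rw [← coeff_zero_eq_constantCoeff_apply, LPS, coeff_mk, if_pos rfl]

lemma geom_mul_s9 (p : R) :
    (1 - PowerSeries.C p * PowerSeries.X) * geomPS p = 1 := by
  refine PowerSeries.ext fun n => ?_
  rw [sub_mul, one_mul, map_sub]
  rw [mul_assoc]
  match n with
  | 0 => simp [geomPS, PowerSeries.coeff_mk]
  | n + 1 =>
    rw [PowerSeries.coeff_C_mul, PowerSeries.coeff_succ_X_mul, PowerSeries.coeff_one,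
      if_neg (by omega), geomPS, coeff_mk, coeff_mk, pow_succ']
    ring

lemma dLPS (p : R) :
    d⁄dX R (LPS p) = PowerSeries.mk fun n => p ^ (n + 1) := by
  refine PowerSeries.ext fun n => ?_
  rw [PowerSeries.coeff_derivative, LPS, coeff_mk, coeff_mk, if_neg (by omega)]
  have : ((n : R) + 1) = Polynomial.C ((n : ℝ) + 1) := by
    simp
  rw [this, mul_comm, ← mul_assoc, ← map_mul]
  rw [show ((n : ℝ) + 1) * ((n + 1 : ℕ) : ℝ)⁻¹ = 1 by
    push_cast; field_simp]
  rw [map_one, one_mul]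

lemma geom_deriv (p : R) :
    d⁄dX R (geomPS p) = d⁄dX R (LPS p) * geomPS p := by
  refine PowerSeries.ext fun n => ?_
  rw [PowerSeries.coeff_derivative, dLPS, PowerSeries.coeff_mul, geomPS, coeff_mk]
  have : ∀ q ∈ Finset.HasAntidiagonal.antidiagonal n,
      (PowerSeries.coeff q.1) (PowerSeries.mk fun m => p ^ (m+1)) *
        (PowerSeries.coeff q.2) (PowerSeries.mk fun m => p ^ m) = p ^ (n + 1) := by
    intro q hq
    rw [coeff_mk, coeff_mk, ← pow_add]
    congr 1
    have := Finset.HasAntidiagonal.mem_antidiagonal.mp hq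
    omega
  rw [Finset.sum_congr rfl this, Finset.sum_const, Finset.Nat.card_antidiagonal,
    nsmul_eq_mul]
  push_cast
  ring

lemma expPS_LPS (p : R) : expPS (LPS p) = geomPS p := by
  refine ode_unique (G := d⁄dX R (LPS p)) (expPS_deriv (constantCoeff_LPS p))
    (geom_deriv p) ?_
  rw [coeff_zero_eq_constantCoeff_apply, constantCoeff_expPS (constantCoeff_LPS p)]
  simp [geomPS, PowerSeries.coeff_mk]

lemma invOfUnit_eq_geom (p : R) :
    PowerSeries.invOfUnit (1 - PowerSeries.C p * PowerSeries.X) 1 = geomPS p := by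
  have hu : (1 - PowerSeries.C p * PowerSeries.X) *
      PowerSeries.invOfUnit (1 - PowerSeries.C p * PowerSeries.X) 1 = 1 := by
    refine PowerSeries.mul_invOfUnit _ _ ?_
    simp
  calc PowerSeries.invOfUnit (1 - PowerSeries.C p * PowerSeries.X) 1
      = ((1 - PowerSeries.C p * PowerSeries.X) * geomPS p) *
        PowerSeries.invOfUnit (1 - PowerSeries.C p * PowerSeries.X) 1 := by
        rw [geom_mul_s9, one_mul]
    _ = geomPS p * ((1 - PowerSeries.C p * PowerSeries.X) *
        PowerSeries.invOfUnit (1 - PowerSeries.C p * PowerSeries.X) 1) := by ring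
    _ = geomPS p := by rw [hu, mul_one]

lemma factor_eq (c : ℝ) :
    1 + (PowerSeries.C (Polynomial.C c) * PowerSeries.X) *
        PowerSeries.invOfUnit
          (1 - PowerSeries.C (Polynomial.C c * Polynomial.X) * PowerSeries.X) 1
      = expPS (LPS (Polynomial.C c * Polynomial.X) -
          LPS (Polynomial.C c * (Polynomial.X - 1))) := by
  set p : R := Polynomial.C c * Polynomial.X with hp
  set q : R := Polynomial.C c * (Polynomial.X - 1) with hq
  have hqp : q = p - Polynomial.C c := by rw [hp, hq]; ring
  have h1 : 1 + (PowerSeries.C (Polynomial.C c) * PowerSeries.X) *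
      PowerSeries.invOfUnit (1 - PowerSeries.C p * PowerSeries.X) 1
      = (1 - PowerSeries.C q * PowerSeries.X) * geomPS p := by
    rw [invOfUnit_eq_geom, hqp, map_sub]
    have := geom_mul_s9 p
    calc 1 + (PowerSeries.C (Polynomial.C c) * PowerSeries.X) * geomPS p
        = (1 - PowerSeries.C p * PowerSeries.X) * geomPS p +
          (PowerSeries.C (Polynomial.C c) * PowerSeries.X) * geomPS p := by
          rw [this]
      _ = (1 - (PowerSeries.C p - PowerSeries.C (Polynomial.C c)) * PowerSeries.X) *
          geomPS p := by ring
  rw [h1]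
  have hsub : PowerSeries.constantCoeff (LPS p - LPS q) = 0 := by
    rw [map_sub, constantCoeff_LPS, constantCoeff_LPS, sub_zero]
  have h2 : expPS (LPS p - LPS q) * expPS (LPS q) = expPS (LPS p) := by
    rw [← expPS_add hsub (constantCoeff_LPS q), sub_add_cancel]
  have h3 : ((1 - PowerSeries.C q * PowerSeries.X) * geomPS p) * expPS (LPS q)
      = expPS (LPS p) := by
    rw [expPS_LPS, expPS_LPS]
    calc (1 - PowerSeries.C q * PowerSeries.X) * geomPS p * geomPS q
        = geomPS p * ((1 - PowerSeries.C q * PowerSeries.X) * geomPS q) := by ring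
      _ = geomPS p := by rw [geom_mul_s9, mul_one]
  have h4 : ((1 - PowerSeries.C q * PowerSeries.X) * geomPS p) * expPS (LPS q)
      = expPS (LPS p - LPS q) * expPS (LPS q) := by rw [h2, h3]
  have hu : expPS (LPS q) * (1 - PowerSeries.C q * PowerSeries.X) = 1 := by
    rw [expPS_LPS, mul_comm, geom_mul_s9]
  calc (1 - PowerSeries.C q * PowerSeries.X) * geomPS p
      = ((1 - PowerSeries.C q * PowerSeries.X) * geomPS p) *
        (expPS (LPS q) * (1 - PowerSeries.C q * PowerSeries.X)) := by rw [hu, mul_one]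
    _ = (((1 - PowerSeries.C q * PowerSeries.X) * geomPS p) * expPS (LPS q)) *
        (1 - PowerSeries.C q * PowerSeries.X) := by ring
    _ = (expPS (LPS p - LPS q) * expPS (LPS q)) *
        (1 - PowerSeries.C q * PowerSeries.X) := by rw [h4]
    _ = expPS (LPS p - LPS q) * (expPS (LPS q) * (1 - PowerSeries.C q * PowerSeries.X)) := by
        ring
    _ = expPS (LPS p - LPS q) := by rw [hu, mul_one]

lemma expPS_prod {ι : Type*} (s : Finset ι) (f : ι → PowerSeries R)
    (hf : ∀ i ∈ s, PowerSeries.constantCoeff (f i) = 0) :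
    ∏ i ∈ s, expPS (f i) = expPS (∑ i ∈ s, f i) := by
  induction s using Finset.cons_induction with
  | empty => simp [expPS_zero]
  | cons i s his ih =>
    rw [Finset.prod_cons, Finset.sum_cons, ih (fun j hj => hf j (Finset.mem_cons_of_mem hj)),
      expPS_add (hf i (Finset.mem_cons_self i s))]
    rw [map_sum]
    exact Finset.sum_eq_zero fun j hj => hf j (Finset.mem_cons_of_mem hj)

theorem product_eq_exp_powerSums (a : ℕ → ℝ) (n : ℕ) (hn : 1 ≤ n) :
    (∏ m ∈ Finset.Icc 1 n,
      (1 + (PowerSeries.C (Polynomial.C (a m)) * PowerSeries.X) *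
        PowerSeries.invOfUnit
          (1 - PowerSeries.C (Polynomial.C (a m) * Polynomial.X) *
            PowerSeries.X) 1)) =
      expPS (PowerSeries.mk fun j =>
        if j = 0 then 0 else
          Polynomial.C (powerSum a n j / (j : ℝ)) *
            (Polynomial.X ^ j - (Polynomial.X - 1) ^ j)) := by
  have step1 : (∏ m ∈ Finset.Icc 1 n,
      (1 + (PowerSeries.C (Polynomial.C (a m)) * PowerSeries.X) *
        PowerSeries.invOfUnit
          (1 - PowerSeries.C (Polynomial.C (a m) * Polynomial.X) *
            PowerSeries.X) 1))
      = ∏ m ∈ Finset.Icc 1 n,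
        expPS (LPS (Polynomial.C (a m) * Polynomial.X) -
          LPS (Polynomial.C (a m) * (Polynomial.X - 1))) :=
    Finset.prod_congr rfl fun m _ => factor_eq (a m)
  rw [step1, expPS_prod _ _ (fun m _ => by
    rw [map_sub, constantCoeff_LPS, constantCoeff_LPS, sub_zero])]
  refine congrArg expPS ?_
  refine PowerSeries.ext fun j => ?_
  rw [map_sum, coeff_mk]
  by_cases hj : j = 0
  · subst hj
    simp [LPS, PowerSeries.coeff_mk]
  · rw [if_neg hj]
    have hterm : ∀ m, PowerSeries.coeff j (LPS (Polynomial.C (a m) * Polynomial.X) -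
        LPS (Polynomial.C (a m) * (Polynomial.X - 1)))
        = Polynomial.C (a m ^ j / (j : ℝ)) *
            (Polynomial.X ^ j - (Polynomial.X - 1) ^ j) := by
      intro m
      rw [map_sub, LPS, LPS, coeff_mk, coeff_mk, if_neg hj, if_neg hj]
      rw [mul_pow, mul_pow, ← Polynomial.C_pow, div_eq_mul_inv, map_mul]
      ring
    rw [Finset.sum_congr rfl fun m _ => hterm m, ← Finset.sum_mul, ← map_sum]
    congr 2
    rw [powerSum, Finset.sum_div]
end

section
/- For weights a_j = 1, the number of weakly decreasing k-tuples ℓ from {1,...,n} with σ(ℓ) = j equals C(n, k-j) · C(k-1, j) for 0 ≤ j ≤ k-1; equivalently, the random variable S_{n,k} counting adjacent equalities in a uniformly random k-multiset of {1,...,n} satisfies P(S_{n,k} = j) = C(n,k-j)·C(k-1,j)/C(n+k-1,k), a hypergeometric distribution. -/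
open Finset

namespace SigmaHyper

variable {k : ℕ}

/-- Embed `Fin (k-1)` into `Fin k` (as position `i`). -/
def idx1 (i : Fin (k - 1)) : Fin k := ⟨i.1, by have := i.2; omega⟩

/-- Embed `Fin (k-1)` into `Fin k` (as position `i+1`). -/
def idx2 (i : Fin (k - 1)) : Fin k := ⟨i.1 + 1, by have := i.2; omega⟩

/-- Set of adjacent-equality positions. -/
def eqset (ℓ : Fin k → ℕ) : Finset (Fin (k - 1)) :=
  univ.filter fun i => ℓ (idx1 i) = ℓ (idx2 i)

lemma sigmaEq_eq_card_eqset (ℓ : Fin k → ℕ) : sigmaEq ℓ = (eqset ℓ).card := by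
  unfold sigmaEq eqset
  rw [eq_comm]
  apply Finset.card_bij (fun i _ => ((idx1 i, idx2 i) : Fin k × Fin k))
  · intro i hi
    simp only [mem_filter, mem_univ, true_and] at hi ⊢
    exact ⟨rfl, hi⟩
  · intro a ha b hb h
    have h1 : idx1 a = idx1 b := (Prod.ext_iff.mp h).1
    have h2 : (idx1 a).1 = (idx1 b).1 := congrArg Fin.val h1
    exact Fin.ext h2
  · intro p hp
    simp only [mem_filter, mem_univ, true_and] at hp
    obtain ⟨h1, h2⟩ := hp
    have hlt : p.1.1 < k - 1 := by have := p.2.2; omega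
    refine ⟨⟨p.1.1, hlt⟩, ?_, ?_⟩
    · have e1 : idx1 (⟨p.1.1, hlt⟩ : Fin (k - 1)) = p.1 := Fin.ext rfl
      have e2 : idx2 (⟨p.1.1, hlt⟩ : Fin (k - 1)) = p.2 :=
        Fin.ext (by show p.1.1 + 1 = p.2.1; omega)
      simp only [mem_filter, mem_univ, true_and, e1, e2]
      exact h2
    · have e1 : idx1 (⟨p.1.1, hlt⟩ : Fin (k - 1)) = p.1 := Fin.ext rfl
      have e2 : idx2 (⟨p.1.1, hlt⟩ : Fin (k - 1)) = p.2 :=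
        Fin.ext (by show p.1.1 + 1 = p.2.1; omega)
      rw [e1, e2]

/-- For a weakly decreasing tuple, the number of distinct values plus the number of
adjacent equalities equals `k`. -/
lemma card_image_add_card_eqset (ℓ : Fin k → ℕ)
    (hd : ∀ i j : Fin k, i ≤ j → ℓ j ≤ ℓ i) :
    (image ℓ univ).card + (eqset ℓ).card = k := by
  classical
  set L : Finset (Fin k) := univ.filter fun i => ∀ i' : Fin k, i' < i → ℓ i' ≠ ℓ i with hL
  have himg : image ℓ L = image ℓ univ := by
    apply Finset.Subset.antisymm (image_subset_image (subset_univ _))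
    intro x hx
    obtain ⟨i, _, hix⟩ := mem_image.mp hx
    set S : Finset (Fin k) := univ.filter fun t => ℓ t = ℓ i with hS
    have hSne : S.Nonempty := ⟨i, by simp [hS]⟩
    set i0 := S.min' hSne with hi0
    have hi0S : i0 ∈ S := S.min'_mem hSne
    have hi0v : ℓ i0 = ℓ i := (mem_filter.mp hi0S).2
    have hi0L : i0 ∈ L := by
      simp only [hL, mem_filter, mem_univ, true_and]
      intro i' hlt hne
      have : i0 ≤ i' := S.min'_le i' (by simp [hS, hne, hi0v])
      exact absurd hlt (not_lt.mpr this)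
    exact mem_image.mpr ⟨i0, hi0L, by rw [hi0v, hix]⟩
  have hinj : Set.InjOn ℓ L := by
    intro a ha b hb hab
    rw [Finset.mem_coe, hL, mem_filter] at ha hb
    by_contra hne
    rcases lt_or_gt_of_ne (fun h : a = b => hne h) with h | h
    · exact hb.2 a h hab
    · exact ha.2 b h hab.symm
  have hcard1 : (image ℓ univ).card = L.card := by
    rw [← himg, Finset.card_image_of_injOn hinj]
  have hcompl : Lᶜ = image idx2 (eqset ℓ) := by
    ext i
    simp only [mem_compl, hL, mem_filter, mem_univ, true_and, mem_image]
    constructor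
    · intro hi
      push_neg at hi
      obtain ⟨i', hlt, heq⟩ := hi
      have hi1 : 1 ≤ i.1 := by
        have := hlt
        rw [Fin.lt_def] at this
        omega
      have hlt2 : i.1 - 1 < k - 1 := by have := i.2; omega
      refine ⟨⟨i.1 - 1, hlt2⟩, ?_, Fin.ext (by show i.1 - 1 + 1 = i.1; omega)⟩
      simp only [eqset, mem_filter, mem_univ, true_and]
      have hidx2 : idx2 (⟨i.1 - 1, hlt2⟩ : Fin (k - 1)) = i :=
        Fin.ext (by show i.1 - 1 + 1 = i.1; omega)
      rw [hidx2]
      have h1 : ℓ i ≤ ℓ (idx1 (⟨i.1 - 1, hlt2⟩ : Fin (k - 1))) := by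
        apply hd
        rw [Fin.le_def]
        show i.1 - 1 ≤ i.1
        omega
      have h2 : ℓ (idx1 (⟨i.1 - 1, hlt2⟩ : Fin (k - 1))) ≤ ℓ i' := by
        apply hd
        rw [Fin.le_def]
        show i'.1 ≤ i.1 - 1
        rw [Fin.lt_def] at hlt
        omega
      omega
    · rintro ⟨t, ht, rfl⟩
      simp only [eqset, mem_filter, mem_univ, true_and] at ht
      intro h
      exact h (idx1 t) (by rw [Fin.lt_def]; simp [idx1, idx2]) ht
  have hinj2 : Function.Injective (idx2 (k := k)) := by
    intro a b hab
    have : a.1 + 1 = b.1 + 1 := congrArg Fin.val hab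
    exact Fin.ext (by omega)
  have hcard2 : Lᶜ.card = (eqset ℓ).card := by
    rw [hcompl, Finset.card_image_of_injective _ hinj2]
  have := Finset.card_add_card_compl L
  rw [hcard1, ← hcard2]
  rw [Fintype.card_fin] at this
  omega

/-- If the tuple strictly decreases from position `i` to `i+1`, then any value of the tuple
below `ℓ i` is at most `ℓ (i+1)`. -/
lemma le_next (ℓ : Fin k → ℕ) (hd : ∀ i j : Fin k, i ≤ j → ℓ j ≤ ℓ i)
    (t : Fin (k - 1)) (x : ℕ) (hx : x ∈ image ℓ univ) (hlt : x < ℓ (idx1 t)) :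
    x ≤ ℓ (idx2 t) := by
  obtain ⟨s, _, rfl⟩ := mem_image.mp hx
  have hns : ¬ s ≤ idx1 t := fun h => absurd (hd s (idx1 t) h) (by omega)
  have hlt2 : idx2 t ≤ s := by
    rw [not_le, Fin.lt_def] at hns
    rw [Fin.le_def]
    simp only [idx1, idx2] at *
    omega
  exact hd (idx2 t) s hlt2

/-- Injectivity: a weakly decreasing tuple is determined by its equality set and value set. -/
lemma tuple_ext (ℓ ℓ' : Fin k → ℕ)
    (hd : ∀ i j : Fin k, i ≤ j → ℓ j ≤ ℓ i) (hd' : ∀ i j : Fin k, i ≤ j → ℓ' j ≤ ℓ' i)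
    (he : eqset ℓ = eqset ℓ') (hv : image ℓ univ = image ℓ' univ) : ℓ = ℓ' := by
  have key : ∀ m : ℕ, ∀ h : m < k, ℓ ⟨m, h⟩ = ℓ' ⟨m, h⟩ := by
    intro m
    induction m with
    | zero =>
      intro h
      have h1 : ℓ' ⟨0, h⟩ ≤ ℓ ⟨0, h⟩ := by
        have : ℓ' ⟨0, h⟩ ∈ image ℓ univ := by
          rw [hv]; exact mem_image.mpr ⟨⟨0, h⟩, mem_univ _, rfl⟩
        obtain ⟨s, _, hs⟩ := mem_image.mp this
        rw [← hs]
        exact hd _ s (by rw [Fin.le_def]; simp)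
      have h2 : ℓ ⟨0, h⟩ ≤ ℓ' ⟨0, h⟩ := by
        have : ℓ ⟨0, h⟩ ∈ image ℓ' univ := by
          rw [← hv]; exact mem_image.mpr ⟨⟨0, h⟩, mem_univ _, rfl⟩
        obtain ⟨s, _, hs⟩ := mem_image.mp this
        rw [← hs]
        exact hd' _ s (by rw [Fin.le_def]; simp)
      omega
    | succ m ih =>
      intro h
      have hm : m < k := by omega
      have hmk : m < k - 1 := by omega
      set t : Fin (k - 1) := ⟨m, hmk⟩ with ht
      have hidx1 : idx1 t = ⟨m, hm⟩ := Fin.ext rfl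
      have hidx2 : idx2 t = ⟨m + 1, h⟩ := Fin.ext rfl
      have ihm := ih hm
      by_cases hte : t ∈ eqset ℓ
      · have hte' : t ∈ eqset ℓ' := he ▸ hte
        simp only [eqset, mem_filter, mem_univ, true_and] at hte hte'
        rw [hidx1, hidx2] at hte hte'
        rw [← hte, ← hte', ihm]
      · have hte' : t ∉ eqset ℓ' := he ▸ hte
        simp only [eqset, mem_filter, mem_univ, true_and] at hte hte'
        have hle : ℓ (idx2 t) ≤ ℓ (idx1 t) := hd _ _ (by rw [Fin.le_def]; simp [idx1, idx2])
        have hle' : ℓ' (idx2 t) ≤ ℓ' (idx1 t) := hd' _ _ (by rw [Fin.le_def]; simp [idx1, idx2])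
        have hlt : ℓ (idx2 t) < ℓ (idx1 t) := lt_of_le_of_ne hle (fun hh => hte hh.symm)
        have hlt' : ℓ' (idx2 t) < ℓ' (idx1 t) := lt_of_le_of_ne hle' (fun hh => hte' hh.symm)
        have heq1 : ℓ (idx1 t) = ℓ' (idx1 t) := by rw [hidx1]; exact ihm
        have h1 : ℓ' (idx2 t) ≤ ℓ (idx2 t) := by
          apply le_next ℓ hd t
          · rw [hv]; exact mem_image.mpr ⟨idx2 t, mem_univ _, rfl⟩
          · rw [heq1]; exact hlt'
        have h2 : ℓ (idx2 t) ≤ ℓ' (idx2 t) := by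
          apply le_next ℓ' hd' t
          · rw [← hv]; exact mem_image.mpr ⟨idx2 t, mem_univ _, rfl⟩
          · rw [← heq1]; exact hlt
        rw [← hidx2]
        omega
  funext i
  have := key i.1 i.2
  simpa using this

/-- Discrete intermediate value theorem. -/
lemma ivt (g : ℕ → ℕ) (h0 : g 0 = 0) (hstep : ∀ i, g (i + 1) ≤ g i + 1) :
    ∀ N s, s ≤ g N → ∃ i ≤ N, g i = s := by
  intro N
  induction N with
  | zero => intro s hs; exact ⟨0, le_refl _, by omega⟩
  | succ N ih =>
    intro s hs
    by_cases h : s ≤ g N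
    · obtain ⟨i, hi, heq⟩ := ih s h
      exact ⟨i, by omega, heq⟩
    · have := hstep N
      exact ⟨N + 1, le_refl _, by omega⟩

end SigmaHyper

open SigmaHyper

theorem sigma_distribution_hypergeometric (n k j : ℕ) (hn : 1 ≤ n) (hk : 1 ≤ k)
    (hj : j ≤ k - 1) :
    ((multisetTuples n k).filter fun ℓ => sigmaEq ℓ = j).card =
      n.choose (k - j) * (k - 1).choose j := by
  classical
  have hjk : j < k := by omega
  have hm : 1 ≤ k - j := by omega
  have hcard : ((multisetTuples n k).filter fun ℓ => sigmaEq ℓ = j).card =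
      ((univ : Finset (Fin (k - 1))).powersetCard j ×ˢ
        (Finset.Icc 1 n).powersetCard (k - j)).card := by
    apply Finset.card_bij (fun ℓ _ => (eqset ℓ, image ℓ univ))
    · -- maps into
      intro ℓ hℓ
      simp only [mem_filter] at hℓ
      obtain ⟨hmt, hsig⟩ := hℓ
      simp only [multisetTuples, mem_filter, Fintype.mem_piFinset] at hmt
      obtain ⟨hmem, hd⟩ := hmt
      rw [Finset.mem_product]
      dsimp only
      constructor
      · rw [Finset.mem_powersetCard]
        refine ⟨subset_univ _, ?_⟩
        rw [← sigmaEq_eq_card_eqset, hsig]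
      · rw [Finset.mem_powersetCard]
        constructor
        · intro x hx
          obtain ⟨i, _, rfl⟩ := mem_image.mp hx
          exact hmem i
        · have := card_image_add_card_eqset ℓ hd
          rw [← sigmaEq_eq_card_eqset, hsig] at this
          omega
    · -- injective
      intro a ha b hb hab
      simp only [multisetTuples, mem_filter] at ha hb
      rw [Prod.ext_iff] at hab
      exact tuple_ext a b ha.1.2 hb.1.2 hab.1 hab.2
    · -- surjective
      rintro ⟨A, B⟩ hAB
      rw [Finset.mem_product, Finset.mem_powersetCard, Finset.mem_powersetCard] at hAB
      obtain ⟨⟨-, hAc⟩, hBs, hBc⟩ := hAB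
      set m := k - j with hmdef
      set f := B.orderEmbOfFin hBc with hf
      set r : ℕ → ℕ := fun i => (univ.filter fun t : Fin (k - 1) => t.1 < i ∧ t ∉ A).card
        with hr
      have hr_mono : Monotone r := by
        intro a b hab
        apply Finset.card_le_card
        intro t ht
        simp only [mem_filter, mem_univ, true_and] at ht ⊢
        exact ⟨lt_of_lt_of_le ht.1 hab, ht.2⟩
      have hr_le : ∀ i, r i ≤ (k - 1) - j := by
        intro i
        have hsub : (univ.filter fun t : Fin (k - 1) => t.1 < i ∧ t ∉ A) ⊆ Aᶜ := by
          intro t ht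
          simp only [mem_filter, mem_univ, true_and] at ht
          simp [ht.2]
        calc r i ≤ Aᶜ.card := Finset.card_le_card hsub
          _ = (k - 1) - j := by rw [Finset.card_compl, Fintype.card_fin, hAc]
      have hr_zero : r 0 = 0 := by
        simp only [hr]
        rw [Finset.card_eq_zero]
        ext t
        simp
      have hr_top : r (k - 1) = (k - 1) - j := by
        have : (univ.filter fun t : Fin (k - 1) => t.1 < k - 1 ∧ t ∉ A) = Aᶜ := by
          ext t
          simp [t.2]
        simp only [hr]
        rw [this, Finset.card_compl, Fintype.card_fin, hAc]
      have hr_in : ∀ t : Fin (k - 1), t ∈ A → r (t.1 + 1) = r t.1 := by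
        intro t htA
        simp only [hr]
        congr 1
        ext x
        simp only [mem_filter, mem_univ, true_and]
        constructor
        · rintro ⟨hx1, hx2⟩
          refine ⟨?_, hx2⟩
          rcases Nat.lt_succ_iff_lt_or_eq.mp hx1 with h | h
          · exact h
          · exfalso; exact hx2 (by rwa [show x = t from Fin.ext h])
        · rintro ⟨hx1, hx2⟩
          exact ⟨by omega, hx2⟩
      have hr_out : ∀ t : Fin (k - 1), t ∉ A → r (t.1 + 1) = r t.1 + 1 := by
        intro t htA
        simp only [hr]
        have hins : (univ.filter fun x : Fin (k - 1) => x.1 < t.1 + 1 ∧ x ∉ A) =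
            insert t (univ.filter fun x : Fin (k - 1) => x.1 < t.1 ∧ x ∉ A) := by
          ext x
          simp only [mem_filter, mem_univ, true_and, mem_insert]
          constructor
          · rintro ⟨hx1, hx2⟩
            rcases Nat.lt_succ_iff_lt_or_eq.mp hx1 with h | h
            · exact Or.inr ⟨h, hx2⟩
            · exact Or.inl (Fin.ext h)
          · rintro (rfl | ⟨hx1, hx2⟩)
            · exact ⟨by omega, htA⟩
            · exact ⟨by omega, hx2⟩
        rw [hins, Finset.card_insert_of_notMem (by simp)]
      have hr_step : ∀ i, r (i + 1) ≤ r i + 1 := by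
        intro i
        by_cases hik : i < k - 1
        · by_cases hiA : (⟨i, hik⟩ : Fin (k - 1)) ∈ A
          · rw [show i = (⟨i, hik⟩ : Fin (k - 1)).1 from rfl, hr_in _ hiA]; omega
          · rw [show i = (⟨i, hik⟩ : Fin (k - 1)).1 from rfl, hr_out _ hiA]
        · have : r (i + 1) = r i := by
            simp only [hr]
            congr 1
            ext x
            simp only [mem_filter, mem_univ, true_and]
            have := x.2
            constructor <;> rintro ⟨h1, h2⟩ <;> exact ⟨by omega, h2⟩
          omega
      -- define the tuple
      have hidx_lt : ∀ i : Fin k, m - 1 - r i.1 < m := fun i => by omega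
      set ℓ : Fin k → ℕ := fun i => f ⟨m - 1 - r i.1, hidx_lt i⟩ with hℓ
      have hdec : ∀ i j' : Fin k, i ≤ j' → ℓ j' ≤ ℓ i := by
        intro i j' hij
        simp only [hℓ]
        apply f.monotone
        rw [Fin.mk_le_mk]
        have := hr_mono (Fin.le_def.mp hij)
        omega
      have hℓ_eqset : eqset ℓ = A := by
        ext t
        simp only [eqset, mem_filter, mem_univ, true_and]
        have hv1 : ℓ (idx1 t) = f ⟨m - 1 - r t.1, hidx_lt (idx1 t)⟩ := rfl
        have hv2 : ℓ (idx2 t) = f ⟨m - 1 - r (t.1 + 1), hidx_lt (idx2 t)⟩ := rfl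
        constructor
        · intro hfe
          by_contra htA
          have hro := hr_out t htA
          have hb := hr_le (t.1 + 1)
          have hineq : m - 1 - r t.1 ≠ m - 1 - r (t.1 + 1) := by omega
          rw [hv1, hv2] at hfe
          have := f.injective hfe
          exact hineq (by simpa [Fin.ext_iff] using this)
        · intro htA
          rw [hv1, hv2]
          congr 1
          exact Fin.ext (by simp [hr_in t htA])
      have hℓ_image : image ℓ univ = B := by
        apply Finset.Subset.antisymm
        · intro x hx
          obtain ⟨i, _, rfl⟩ := mem_image.mp hx
          exact B.orderEmbOfFin_mem hBc _
        · intro x hx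
          have hxr : x ∈ Set.range f := by rw [hf, Finset.range_orderEmbOfFin]; exact hx
          obtain ⟨s, hs⟩ := hxr
          have hs1 : s.1 ≤ m - 1 := by have := s.2; omega
          have hsle : m - 1 - s.1 ≤ r (k - 1) := by rw [hr_top]; omega
          obtain ⟨i, hik, hri⟩ := ivt r hr_zero hr_step (k - 1) (m - 1 - s.1) hsle
          have hik2 : i < k := by omega
          refine mem_image.mpr ⟨⟨i, hik2⟩, mem_univ _, ?_⟩
          simp only [hℓ]
          rw [← hs]
          congr 1
          exact Fin.ext (by simp [hri]; omega)
      refine ⟨ℓ, ?_, ?_⟩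
      · simp only [mem_filter, multisetTuples, Fintype.mem_piFinset]
        refine ⟨⟨fun i => hBs (B.orderEmbOfFin_mem hBc _), hdec⟩, ?_⟩
        rw [sigmaEq_eq_card_eqset, hℓ_eqset, hAc]
      · rw [hℓ_eqset, hℓ_image]
  rw [hcard, Finset.card_product, Finset.card_powersetCard, Finset.card_powersetCard,
    Finset.card_univ, Fintype.card_fin, Nat.card_Icc]
  simp only [Nat.add_sub_cancel]
  ring
end

section
/- For all n ≥ 1 and k ≥ 2, ∑_{n ≥ ℓ_1 ≥ ... ≥ ℓ_k ≥ 1} σ(ℓ)/(ℓ_1···ℓ_k) = ∑_{m=0}^{k-2} H_n^{(m+2)} · ζ*_n({1}_{k-m-2}), where H_n^{(r)} = ∑_{i=1}^n 1/i^r and ζ*_n({1}_j) = ∑_{n ≥ ℓ_1 ≥ ... ≥ ℓ_j ≥ 1} 1/(ℓ_1···ℓ_j) with ζ*_n({1}_0) = 1. -/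
/-- Generalized harmonic number $H_n^{(r)}$. -/
noncomputable def genHarmonic (n r : ℕ) : ℝ := ∑ i ∈ Finset.Icc 1 n, (1 : ℝ) / (i : ℝ) ^ r

/-- Truncated multiple zeta star value ζ*_n({1}_j). -/
noncomputable def zetaStarOnes (n j : ℕ) : ℝ :=
  ∑ ℓ ∈ multisetTuples n j, ∏ i, (1 : ℝ) / (ℓ i : ℝ)

/-! ### Auxiliary lemmas -/

lemma mem_MT {n k : ℕ} {ℓ : Fin k → ℕ} :
    ℓ ∈ multisetTuples n k ↔ (∀ i, ℓ i ∈ Finset.Icc 1 n) ∧ ∀ i j : Fin k, i ≤ j → ℓ j ≤ ℓ i := by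
  simp [multisetTuples, Fintype.mem_piFinset]

lemma cons_mem_MT {n k : ℕ} {a : ℕ} {t : Fin k → ℕ} (ha : a ∈ Finset.Icc 1 n)
    (ht : t ∈ multisetTuples a k) : Fin.cons a t ∈ multisetTuples n (k+1) := by
  rw [mem_MT] at ht ⊢
  simp only [Finset.mem_Icc] at ha
  obtain ⟨ht1, ht2⟩ := ht
  have hle : ∀ j : Fin k, t j ≤ a := fun j => (Finset.mem_Icc.mp (ht1 j)).2
  have hge : ∀ j : Fin k, 1 ≤ t j := fun j => (Finset.mem_Icc.mp (ht1 j)).1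
  constructor
  · intro i
    rcases Fin.eq_zero_or_eq_succ i with rfl | ⟨i', rfl⟩
    · simp [Finset.mem_Icc]; omega
    · simp only [Fin.cons_succ, Finset.mem_Icc]
      exact ⟨hge i', le_trans (hle i') ha.2⟩
  · intro i j hij
    rcases Fin.eq_zero_or_eq_succ i with rfl | ⟨i', rfl⟩
    · rcases Fin.eq_zero_or_eq_succ j with rfl | ⟨j', rfl⟩
      · simp
      · simpa [Fin.cons_succ] using hle j'
    · rcases Fin.eq_zero_or_eq_succ j with rfl | ⟨j', rfl⟩
      · exact absurd hij (by simp [Fin.le_def])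
      · simpa [Fin.cons_succ] using ht2 i' j' (by simpa [Fin.succ_le_succ_iff] using hij)

lemma MT_head_mem {n k : ℕ} {ℓ : Fin (k+1) → ℕ} (h : ℓ ∈ multisetTuples n (k+1)) :
    ℓ 0 ∈ Finset.Icc 1 n := (mem_MT.mp h).1 0

lemma MT_tail_mem {n k : ℕ} {ℓ : Fin (k+1) → ℕ} (h : ℓ ∈ multisetTuples n (k+1)) :
    Fin.tail ℓ ∈ multisetTuples (ℓ 0) k := by
  rw [mem_MT] at h ⊢
  obtain ⟨h1, h2⟩ := h
  constructor
  · intro i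
    have := h1 i.succ
    simp only [Finset.mem_Icc] at this ⊢
    exact ⟨this.1, h2 0 i.succ (Fin.zero_le _)⟩
  · intro i j hij
    exact h2 i.succ j.succ (by simpa [Fin.succ_le_succ_iff] using hij)

lemma sum_split (n k : ℕ) (f : ℕ → (Fin k → ℕ) → ℝ) :
    ∑ ℓ ∈ multisetTuples n (k+1), f (ℓ 0) (Fin.tail ℓ)
      = ∑ a ∈ Finset.Icc 1 n, ∑ t ∈ multisetTuples a k, f a t := by
  rw [Finset.sum_sigma']
  apply Finset.sum_nbij' (i := fun ℓ => (⟨ℓ 0, Fin.tail ℓ⟩ : Σ _ : ℕ, Fin k → ℕ))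
    (j := fun p => Fin.cons p.1 p.2)
  · intro ℓ hℓ
    simp only [Finset.mem_sigma]
    exact ⟨MT_head_mem hℓ, MT_tail_mem hℓ⟩
  · intro p hp
    simp only [Finset.mem_sigma] at hp
    exact cons_mem_MT hp.1 hp.2
  · intro ℓ hℓ
    simp [Fin.cons_self_tail]
  · intro p hp
    simp [Fin.tail_cons]
  · intro ℓ hℓ
    rfl

lemma sigmaEq_eq {k : ℕ} (ℓ : Fin (k+1) → ℕ) :
    sigmaEq ℓ = (Finset.univ.filter fun i : Fin k => ℓ i.castSucc = ℓ i.succ).card := by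
  unfold sigmaEq
  have hlt : ∀ p : Fin (k+1) × Fin (k+1),
      p ∈ (Finset.univ.filter fun p : Fin (k+1) × Fin (k+1) =>
        (p.2 : ℕ) = (p.1 : ℕ) + 1 ∧ ℓ p.1 = ℓ p.2) → (p.1 : ℕ) < k := by
    intro p hp
    simp only [Finset.mem_filter] at hp
    have := p.2.isLt
    omega
  refine Finset.card_bij' (fun p hp => ⟨(p.1 : ℕ), hlt p hp⟩)
    (fun i _ => (i.castSucc, i.succ)) ?_ ?_ ?_ ?_
  · intro p hp
    simp only [Finset.mem_filter, Finset.mem_univ, true_and] at hp ⊢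
    have e1 : Fin.castSucc (⟨(p.1 : ℕ), hlt p (by simp [Finset.mem_filter, hp])⟩ : Fin k) = p.1 :=
      Fin.ext (by simp)
    have e2 : Fin.succ (⟨(p.1 : ℕ), hlt p (by simp [Finset.mem_filter, hp])⟩ : Fin k) = p.2 :=
      Fin.ext (by simp [hp.1])
    rw [e1, e2]
    exact hp.2
  · intro i hi
    simp only [Finset.mem_filter, Finset.mem_univ, true_and] at hi ⊢
    exact ⟨by simp, hi⟩
  · intro p hp
    simp only [Finset.mem_filter, Finset.mem_univ, true_and] at hp
    ext <;> simp [hp.1]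
  · intro i _
    exact Fin.ext (by simp)

lemma sigmaEq_one (ℓ : Fin 1 → ℕ) : sigmaEq ℓ = 0 := by
  rw [sigmaEq_eq]
  simp

lemma sigmaEq_cons {k : ℕ} (a : ℕ) (t : Fin (k+1) → ℕ) :
    sigmaEq (Fin.cons a t : Fin (k+2) → ℕ) = (if a = t 0 then 1 else 0) + sigmaEq t := by
  rw [sigmaEq_eq, sigmaEq_eq]
  rw [Finset.card_filter, Finset.card_filter, Fin.sum_univ_succ]
  simp only [Fin.castSucc_zero, Fin.cons_zero, Fin.succ_zero_eq_one,
    ← Fin.succ_castSucc, Fin.cons_succ]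
  rw [show (Fin.cons a t : Fin (k+2) → ℕ) 1 = t 0 by rw [← Fin.succ_zero_eq_one, Fin.cons_succ]]

/-- The main weighted sum. -/
noncomputable def Ssum (n k : ℕ) : ℝ :=
  ∑ ℓ ∈ multisetTuples n k, (sigmaEq ℓ : ℝ) * ∏ i, (1 : ℝ) / (ℓ i : ℝ)

lemma Z_zero (n : ℕ) : zetaStarOnes n 0 = 1 := by
  unfold zetaStarOnes multisetTuples
  simp

lemma Z_succ (n j : ℕ) : zetaStarOnes n (j+1)
    = ∑ a ∈ Finset.Icc 1 n, (1 / (a:ℝ)) * zetaStarOnes a j := by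
  unfold zetaStarOnes
  calc ∑ ℓ ∈ multisetTuples n (j+1), ∏ i, (1 : ℝ) / (ℓ i : ℝ)
      = ∑ ℓ ∈ multisetTuples n (j+1),
        (fun (a : ℕ) (t : Fin j → ℕ) => (1/(a:ℝ)) * ∏ i, (1:ℝ)/(t i : ℝ)) (ℓ 0) (Fin.tail ℓ) := by
        refine Finset.sum_congr rfl fun ℓ _ => ?_
        rw [Fin.prod_univ_succ]; rfl
    _ = ∑ a ∈ Finset.Icc 1 n, ∑ t ∈ multisetTuples a j,
        (fun (a : ℕ) (t : Fin j → ℕ) => (1/(a:ℝ)) * ∏ i, (1:ℝ)/(t i : ℝ)) a t :=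
        sum_split n j (fun (a : ℕ) (t : Fin j → ℕ) => (1/(a:ℝ)) * ∏ i, (1:ℝ)/(t i : ℝ))
    _ = _ := by simp [Finset.mul_sum]

lemma S_one (n : ℕ) : Ssum n 1 = 0 := by
  unfold Ssum
  refine Finset.sum_eq_zero fun ℓ _ => ?_
  rw [sigmaEq_one]
  simp

lemma head_eq_ite {n k : ℕ} (a : ℕ) (ha : a ∈ Finset.Icc 1 n) :
    ∑ t ∈ multisetTuples a (k+1), (if a = t 0 then (1:ℝ) else 0) * ∏ i, (1:ℝ)/(t i : ℝ)
      = (1/(a:ℝ)) * zetaStarOnes a k := by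
  have h1 : 1 ≤ a := (Finset.mem_Icc.mp ha).1
  calc ∑ t ∈ multisetTuples a (k+1), (if a = t 0 then (1:ℝ) else 0) * ∏ i, (1:ℝ)/(t i : ℝ)
      = ∑ t ∈ multisetTuples a (k+1),
        (fun (b : ℕ) (u : Fin k → ℕ) =>
          (if a = b then (1:ℝ) else 0) * ((1/(b:ℝ)) * ∏ i, (1:ℝ)/(u i : ℝ))) (t 0) (Fin.tail t) := by
        refine Finset.sum_congr rfl fun t _ => ?_
        rw [Fin.prod_univ_succ]; rfl
    _ = ∑ b ∈ Finset.Icc 1 a, ∑ u ∈ multisetTuples b k,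
        (if a = b then (1:ℝ) else 0) * ((1/(b:ℝ)) * ∏ i, (1:ℝ)/(u i : ℝ)) :=
        sum_split a k (fun (b : ℕ) (u : Fin k → ℕ) =>
          (if a = b then (1:ℝ) else 0) * ((1/(b:ℝ)) * ∏ i, (1:ℝ)/(u i : ℝ)))
    _ = ∑ b ∈ Finset.Icc 1 a, (if a = b then (1:ℝ) else 0) * ((1/(b:ℝ)) * zetaStarOnes b k) := by
        unfold zetaStarOnes
        simp [Finset.mul_sum]
    _ = (1/(a:ℝ)) * zetaStarOnes a k := by
        simp only [ite_mul, one_mul, zero_mul]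
        rw [Finset.sum_ite_eq]
        simp [Finset.mem_Icc, h1]

lemma S_rec (n k : ℕ) : Ssum n (k+2)
    = ∑ a ∈ Finset.Icc 1 n,
        ((1/(a:ℝ)) * ((1/(a:ℝ)) * zetaStarOnes a k) + (1/(a:ℝ)) * Ssum a (k+1)) := by
  unfold Ssum
  calc ∑ ℓ ∈ multisetTuples n (k+2), (sigmaEq ℓ : ℝ) * ∏ i, (1 : ℝ) / (ℓ i : ℝ)
      = ∑ ℓ ∈ multisetTuples n (k+2),
        (fun (a : ℕ) (t : Fin (k+1) → ℕ) =>
          ((if a = t 0 then (1:ℝ) else 0) + (sigmaEq t : ℝ)) * ((1/(a:ℝ)) * ∏ i, (1:ℝ)/(t i : ℝ)))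
          (ℓ 0) (Fin.tail ℓ) := by
        refine Finset.sum_congr rfl fun ℓ _ => ?_
        have hσ : sigmaEq ℓ = (if ℓ 0 = Fin.tail ℓ 0 then 1 else 0) + sigmaEq (Fin.tail ℓ) := by
          conv_lhs => rw [← Fin.cons_self_tail ℓ]
          rw [sigmaEq_cons]
        rw [hσ, Fin.prod_univ_succ]
        push_cast
        ring_nf
        rfl
    _ = ∑ a ∈ Finset.Icc 1 n, ∑ t ∈ multisetTuples a (k+1),
        ((if a = t 0 then (1:ℝ) else 0) + (sigmaEq t : ℝ)) * ((1/(a:ℝ)) * ∏ i, (1:ℝ)/(t i : ℝ)) :=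
        sum_split n (k+1) (fun (a : ℕ) (t : Fin (k+1) → ℕ) =>
          ((if a = t 0 then (1:ℝ) else 0) + (sigmaEq t : ℝ)) * ((1/(a:ℝ)) * ∏ i, (1:ℝ)/(t i : ℝ)))
    _ = _ := by
        refine Finset.sum_congr rfl fun a ha => ?_
        rw [← head_eq_ite (k := k) a ha]
        rw [Finset.mul_sum, Finset.mul_sum, ← Finset.sum_add_distrib]
        refine Finset.sum_congr rfl fun t _ => ?_
        ring

lemma triangle (n : ℕ) (F : ℕ → ℕ → ℝ) :
    ∑ b ∈ Finset.Icc 1 n, ∑ a ∈ Finset.Icc 1 n, F a b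
      = (∑ a ∈ Finset.Icc 1 n, ∑ b ∈ Finset.Icc 1 a, F a b)
        + ∑ b ∈ Finset.Icc 1 n, ∑ a ∈ Finset.Ico 1 b, F a b := by
  rw [Finset.sum_comm]
  have h1 : ∀ a ∈ Finset.Icc 1 n, ∑ b ∈ Finset.Icc 1 n, F a b
      = (∑ b ∈ Finset.Icc 1 a, F a b) + ∑ b ∈ Finset.Ioc a n, F a b := by
    intro a ha
    have han : a ≤ n := (Finset.mem_Icc.mp ha).2
    have e1 : Finset.Icc 1 n = Finset.Ioc 0 n := by ext x; simp; omega
    have e2 : Finset.Icc 1 a = Finset.Ioc 0 a := by ext x; simp; omega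
    rw [e1, e2, Finset.sum_Ioc_consecutive _ (Nat.zero_le a) han]
  rw [Finset.sum_congr rfl h1, Finset.sum_add_distrib]
  congr 1
  exact Finset.sum_comm' (by
    intro x y
    simp only [Finset.mem_Icc, Finset.mem_Ioc, Finset.mem_Ico]
    omega)

lemma main_lemma (k : ℕ) : ∀ n, Ssum n (k+1)
    = ∑ m ∈ Finset.range k, genHarmonic n (m+2) * zetaStarOnes n (k-1-m) := by
  induction k with
  | zero => intro n; simpa using S_one n
  | succ k ih =>
    intro n
    have hsub : ∀ m : ℕ, (k+1) - 1 - m = k - m := fun m => by omega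
    simp only [hsub]
    set T : ℕ → ℝ := fun m =>
      ∑ b ∈ Finset.Icc 1 n, (1/(b:ℝ)^(m+2)) * zetaStarOnes b (k-m) with hT
    have htel : ∑ m ∈ Finset.range k, (T m - T (m+1)) = T 0 - T k :=
      Finset.sum_range_sub' T k
    have hTk : T k = genHarmonic n (k+2) := by
      rw [hT]
      simp only [Nat.sub_self, Z_zero, mul_one, genHarmonic]
    have hstep : ∀ m ∈ Finset.range k,
        genHarmonic n (m+2) * zetaStarOnes n (k-m)
          = (∑ a ∈ Finset.Icc 1 n,
              (1/(a:ℝ)) * (genHarmonic a (m+2) * zetaStarOnes a (k-1-m)))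
            + (T m - T (m+1)) := by
      intro m hm
      have hmk : m < k := Finset.mem_range.mp hm
      have hk1 : k - m = (k-1-m)+1 := by omega
      have hk2 : k - (m+1) = k - 1 - m := by omega
      rw [hk1, genHarmonic, Z_succ, Finset.sum_mul_sum]
      rw [triangle n (fun a b => (1:ℝ)/(b:ℝ)^(m+2) * ((1/(a:ℝ)) * zetaStarOnes a (k-1-m)))]
      congr 1
      · refine Finset.sum_congr rfl fun a _ => ?_
        rw [← Finset.sum_mul, ← genHarmonic]
        ring
      · rw [hT, ← Finset.sum_sub_distrib]
        simp only [hk2, hk1]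
        refine Finset.sum_congr rfl fun b hb => ?_
        have h1b : 1 ≤ b := (Finset.mem_Icc.mp hb).1
        have hIco : ∑ a ∈ Finset.Ico 1 b, (1/(a:ℝ)) * zetaStarOnes a (k-1-m)
            = zetaStarOnes b ((k-1-m)+1) - (1/(b:ℝ))*zetaStarOnes b (k-1-m) := by
          rw [Z_succ b (k-1-m), ← Finset.Ico_add_one_right_eq_Icc, Finset.sum_Ico_succ_top h1b]
          ring
        rw [← Finset.mul_sum, hIco]
        ring
    rw [S_rec, Finset.sum_range_succ, Nat.sub_self, Z_zero, mul_one,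
      Finset.sum_congr rfl hstep, Finset.sum_add_distrib, Finset.sum_add_distrib, htel, hTk]
    rw [Finset.sum_comm]
    have hinner : ∀ a ∈ Finset.Icc 1 n,
        ∑ m ∈ Finset.range k, (1/(a:ℝ)) * (genHarmonic a (m+2) * zetaStarOnes a (k-1-m))
          = (1/(a:ℝ)) * Ssum a (k+1) := by
      intro a _
      rw [← Finset.mul_sum, ← ih a]
    rw [Finset.sum_congr rfl hinner]
    have hT0 : T 0 = ∑ a ∈ Finset.Icc 1 n, (1/(a:ℝ)) * ((1/(a:ℝ)) * zetaStarOnes a k) := by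
      rw [hT]
      refine Finset.sum_congr rfl fun b _ => ?_
      norm_num
      ring
    rw [hT0]
    ring

theorem expected_sigma_zeta (n k : ℕ) (hn : 1 ≤ n) (hk : 2 ≤ k) :
    (∑ ℓ ∈ multisetTuples n k, (sigmaEq ℓ : ℝ) * ∏ i, (1 : ℝ) / (ℓ i : ℝ)) =
      ∑ m ∈ Finset.range (k - 1), genHarmonic n (m + 2) * zetaStarOnes n (k - m - 2) := by
  obtain ⟨k', rfl⟩ : ∃ k', k = k' + 1 := ⟨k - 1, by omega⟩
  have h := main_lemma k' n
  rw [Ssum] at h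
  rw [h]
  refine Finset.sum_congr (by simp) fun m _ => ?_
  congr 2
  omega
end
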